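/- arXiv:2602.21479 — 3 statements merged into one kernel-verified Lean document; each statement's English description precedes it below -/
import Mathlib

section
/- Expected stopping time of the single-stream ONS test: Let (Z_t)_{t≥1} be i.i.d. random variables taking values in [−1,1] with Δ := E[Z_1] ≠ 0, let A_t = Σ_{j=1}^t Z_j and V_t = Σ_{j=1}^t Z_j², and let (W_t)_{t≥1} be a nonnegative stochastic process satisfying, almost surely for all t ≥ 1, ln(W_t) ≥ A_t² / (4(V_t + |A_t|)) − 2 ln(4t). Then for every α ∈ (0,1) the stopping time τ = inf{t ≥ 1 : W_t ≥ 1/α} satisfies E[τ] ≤ (128/Δ²) ln(256/(α·Δ²)) + (32/Δ²) ln(32/Δ²) + π²/6. -/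
open MeasureTheory ProbabilityTheory
open scoped ENNReal

/-- The stopping time `τ = inf {t ≥ 1 : W t ≥ 1/α}` (with value `∞` if the process never
crosses the threshold). -/
noncomputable def stopTime {Ω : Type*} (W : ℕ → Ω → ℝ) (α : ℝ) (ω : Ω) : ℕ∞ :=
  sInf {n : ℕ∞ | ∃ t : ℕ, n = (t : ℕ∞) ∧ 1 ≤ t ∧ 1 / α ≤ W t ω}

/-- The expected stopping time, computed as `E[τ] = ∑_{t ≥ 1} P(τ > t)`. -/
noncomputable def expStopTime {Ω : Type*} {m : MeasurableSpace Ω} (μ : Measure Ω)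
    (W : ℕ → Ω → ℝ) (α : ℝ) : ℝ≥0∞ :=
  ∑' t : ℕ, μ {ω | ((t + 1 : ℕ) : ℕ∞) < stopTime W α ω}



lemma my_log_le_half {u : ℝ} (hu : 0 < u) : Real.log u ≤ u / 2 := by
  have hs : 0 < Real.sqrt u := Real.sqrt_pos.2 hu
  have h := Real.log_le_sub_one_of_pos hs
  rw [Real.log_sqrt hu.le] at h
  have h2 : Real.sqrt u ^ 2 = u := Real.sq_sqrt hu.le
  nlinarith [sq_nonneg (Real.sqrt u - 2)]

lemma my_exp_quad {x d : ℝ} (hd0 : 0 ≤ d) (hd1 : d ≤ 1) (hx : x ≤ d) :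
    Real.exp x ≤ 1 + x + (1 + d) / 2 * x ^ 2 := by
  rcases le_or_gt x 0 with hx0 | hx0
  · -- exp x ≤ 1 + x + x^2/2 for x ≤ 0
    set y := -x with hy
    have hy0 : 0 ≤ y := by simp [hy]; linarith
    have hp : 1 + y + y ^ 2 / 2 ≤ Real.exp y := by
      have := Real.sum_le_exp_of_nonneg hy0 3
      simpa [Finset.sum_range_succ] using this
    have hE1 : Real.exp x * Real.exp y = 1 := by
      rw [← Real.exp_add]; simp [hy]
    have hq : (0:ℝ) ≤ 1 - y + y ^ 2 / 2 := by nlinarith [sq_nonneg (y - 1)]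
    have hkey : Real.exp x ≤ 1 - y + y ^ 2 / 2 := by
      nlinarith [mul_le_mul_of_nonneg_left hp hq, Real.exp_pos y, sq_nonneg (y ^ 2),
        Real.exp_pos x]
    have : 1 - y + y ^ 2 / 2 ≤ 1 + x + (1 + d) / 2 * x ^ 2 := by
      have : y ^ 2 = x ^ 2 := by rw [hy]; ring
      nlinarith [sq_nonneg x]
    linarith
  · -- 0 < x ≤ d ≤ 1
    have h := Real.exp_bound' hx0.le (hx.trans hd1) (n := 3) (by norm_num)
    have hsum : (∑ m ∈ Finset.range 3, x ^ m / m.factorial) = 1 + x + x ^ 2 / 2 := by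
      simp [Finset.sum_range_succ, Nat.factorial]
    rw [hsum] at h
    have hx3 : x ^ 3 ≤ d * x ^ 2 := by nlinarith [sq_nonneg x]
    calc Real.exp x ≤ 1 + x + x ^ 2 / 2 + x ^ 3 * (3 + 1) / (3*2*1 * 3) := by
          convert h using 3 <;> norm_num [Nat.factorial]
      _ ≤ 1 + x + x ^ 2 / 2 + d * x ^ 2 / 2 := by nlinarith [sq_nonneg x, hx3]
      _ = 1 + x + (1 + d) / 2 * x ^ 2 := by ring

lemma my_calc1 {α δ t : ℝ} (hα0 : 0 < α) (hα1 : α < 1) (hδ0 : 0 < δ) (hδ1 : δ ≤ 1)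
    (ht : 128 / δ ^ 2 * Real.log (256 / (α * δ ^ 2)) ≤ t) :
    Real.log (1 / α) + 2 * Real.log (4 * t) ≤ δ ^ 2 * t / 32 := by
  have hδ2 : 0 < δ ^ 2 := by positivity
  have harg : (256:ℝ) ≤ 256 / (α * δ ^ 2) := by
    rw [le_div_iff₀ (by positivity)]
    nlinarith
  have hlarg : Real.log 256 ≤ Real.log (256 / (α * δ ^ 2)) :=
    Real.log_le_log (by norm_num) harg
  have hl256 : (0:ℝ) < Real.log 256 := Real.log_pos (by norm_num)
  have htpos : 0 < t := by
    have : (0:ℝ) < 128 / δ ^ 2 * Real.log (256 / (α * δ ^ 2)) := by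
      apply mul_pos (by positivity) (lt_of_lt_of_le hl256 hlarg)
    linarith
  -- log t ≤ t δ²/128 + log(128/δ²) - 1
  have hu : 0 < t * δ ^ 2 / 128 := by positivity
  have h1 : Real.log (t * δ ^ 2 / 128) ≤ t * δ ^ 2 / 128 - 1 :=
    Real.log_le_sub_one_of_pos hu
  have h2 : Real.log (t * δ ^ 2 / 128) = Real.log t - Real.log (128 / δ ^ 2) := by
    rw [show t * δ ^ 2 / 128 = t / (128 / δ ^ 2) by field_simp,
      Real.log_div htpos.ne' (by positivity)]
  have hlogt : Real.log t ≤ t * δ ^ 2 / 128 + Real.log (128 / δ ^ 2) - 1 := by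
    rw [h2] at h1; linarith
  have h4t : Real.log (4 * t) = Real.log 4 + Real.log t :=
    Real.log_mul (by norm_num) htpos.ne'
  -- expand logs of powers of two
  have hlog2 : Real.log 2 ≤ 1 := by
    have := Real.log_le_sub_one_of_pos (show (0:ℝ) < 2 by norm_num); linarith
  have hlogα : Real.log α ≤ 0 := Real.log_nonpos hα0.le hα1.le
  have e4 : Real.log 4 = 2 * Real.log 2 := by
    rw [show (4:ℝ) = 2 ^ 2 by norm_num, Real.log_pow]; push_cast; ring
  have e128 : Real.log (128 / δ ^ 2) = 7 * Real.log 2 - Real.log (δ ^ 2) := by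
    rw [Real.log_div (by norm_num) (by positivity),
      show (128:ℝ) = 2 ^ 7 by norm_num, Real.log_pow]; push_cast; ring
  have e256 : Real.log (256 / (α * δ ^ 2)) = 8 * Real.log 2 - Real.log α - Real.log (δ ^ 2) := by
    rw [Real.log_div (by norm_num) (by positivity),
      Real.log_mul hα0.ne' (by positivity),
      show (256:ℝ) = 2 ^ 8 by norm_num, Real.log_pow]; push_cast; ring
  have e1α : Real.log (1 / α) = -Real.log α := by
    rw [one_div, Real.log_inv]
  -- from ht : δ² t / 64 ≥ 2 * log(256/(αδ²))
  have hmain : 2 * Real.log (256 / (α * δ ^ 2)) ≤ δ ^ 2 * t / 64 := by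
    rw [div_mul_eq_mul_div, div_le_iff₀ hδ2] at ht
    nlinarith [ht]
  rw [e1α, h4t, e4]
  rw [e256] at hmain
  rw [e128] at hlogt
  nlinarith [hlogt, hmain, hlog2, hlogα, hδ2]

lemma my_calc2 {δ t : ℝ} (hδ0 : 0 < δ) (hδ1 : δ ≤ 1)
    (ht : 32 / δ ^ 2 * Real.log (32 / δ ^ 2) ≤ t) :
    Real.exp (-(3 * δ ^ 2 / 32) * t) ≤ 1 / t ^ 2 := by
  have hδ2 : 0 < δ ^ 2 := by positivity
  set K := 32 / δ ^ 2 with hK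
  have hK32 : (32:ℝ) ≤ K := by
    rw [hK, le_div_iff₀ hδ2]; nlinarith
  have hKpos : 0 < K := by linarith
  set L := Real.log K with hL
  have hL1 : (1:ℝ) < L := by
    rw [hL, Real.lt_log_iff_exp_lt hKpos]
    have := Real.exp_one_lt_d9
    linarith
  have hLpos : 0 < L := by linarith
  set T := K * L with hT
  have hTpos : 0 < T := mul_pos hKpos hLpos
  have htT : T ≤ t := ht
  have htpos : 0 < t := lt_of_lt_of_le hTpos htT
  have hlogT : Real.log T = L + Real.log L := by
    rw [hT, Real.log_mul hKpos.ne' hLpos.ne']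
  have hlogL : Real.log L ≤ L / 2 := my_log_le_half hLpos
  -- log t ≤ t/T + log T - 1
  have h1 : Real.log (t / T) ≤ t / T - 1 := Real.log_le_sub_one_of_pos (by positivity)
  have h2 : Real.log (t / T) = Real.log t - Real.log T := Real.log_div htpos.ne' hTpos.ne'
  have hlogt : Real.log t ≤ t / T + L + Real.log L - 1 := by
    rw [h2, hlogT] at h1; linarith
  -- 2 log t ≤ 3 t / K
  have hkey : 2 * Real.log t ≤ 3 * δ ^ 2 / 32 * t := by
    have h3K : 3 * δ ^ 2 / 32 * t = 3 * L * (t / T) := by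
      rw [hT, hK]; field_simp
    rw [h3K]
    have htT1 : 1 ≤ t / T := (one_le_div hTpos).2 htT
    nlinarith [hlogt, hlogL, hL1, htT1]
  have h1t : 1 / t ^ 2 = Real.exp (-(2 * Real.log t)) := by
    rw [Real.exp_neg, two_mul, Real.exp_add, Real.exp_log htpos]
    rw [one_div]; congr 1; ring
  rw [h1t]
  apply Real.exp_le_exp.2
  linarith

/-- mgf bound for a single centered factor. -/
lemma my_mgf_one {Ω : Type*} {m : MeasurableSpace Ω} {μ : Measure Ω} [IsProbabilityMeasure μ]
    {Y : Ω → ℝ} (hmeas : Measurable Y) (hbdd : ∀ ω, Y ω ∈ Set.Icc (-1 : ℝ) 1)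
    {δ σ : ℝ} (hδ0 : 0 < δ) (hδ1 : δ ≤ 1) (hσ : |σ| = 1)
    (hmean : σ * ∫ ω, Y ω ∂μ = δ) :
    mgf (fun ω => δ - σ * Y ω) μ (δ / 2) ≤
      Real.exp ((1 + δ) / 2 * (δ / 2) ^ 2 * (1 - δ ^ 2)) := by
  have hσsq : σ ^ 2 = 1 := by rw [← sq_abs, hσ]; norm_num
  set c : ℝ := δ / 2 with hc
  have hc0 : 0 ≤ c := by positivity
  have hXb : ∀ ω, |δ - σ * Y ω| ≤ 1 + δ := by
    intro ω
    have h1 : |σ * Y ω| ≤ 1 := by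
      rw [abs_mul, hσ, one_mul]
      exact abs_le.2 ⟨(hbdd ω).1, (hbdd ω).2⟩
    have := abs_le.1 h1
    rw [abs_le]; constructor <;> nlinarith [hδ0]
  have hYint : Integrable Y μ := by
    refine (integrable_const (1 : ℝ)).mono' hmeas.aestronglyMeasurable ?_
    exact Filter.Eventually.of_forall fun ω => by
      rw [Real.norm_eq_abs]; exact abs_le.2 ⟨(hbdd ω).1, (hbdd ω).2⟩
  have hXmeas : Measurable fun ω => δ - σ * Y ω := measurable_const.sub (hmeas.const_mul σ)
  have hXint : Integrable (fun ω => δ - σ * Y ω) μ :=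
    (integrable_const δ).sub (hYint.const_mul σ)
  have hY2int : Integrable (fun ω => (Y ω) ^ 2) μ := by
    refine (integrable_const (1 : ℝ)).mono' (hmeas.pow_const 2).aestronglyMeasurable ?_
    exact Filter.Eventually.of_forall fun ω => by
      rw [Real.norm_eq_abs, abs_pow]
      nlinarith [abs_le.2 ⟨(hbdd ω).1, (hbdd ω).2⟩, abs_nonneg (Y ω)]
  have hX2int : Integrable (fun ω => (δ - σ * Y ω) ^ 2) μ := by
    have : (fun ω => (δ - σ * Y ω) ^ 2) =
        fun ω => δ ^ 2 - 2 * δ * σ * Y ω + (Y ω) ^ 2 := by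
      funext ω; nlinarith [hσsq]
    rw [this]
    exact ((integrable_const _).sub (hYint.const_mul _)).add hY2int
  -- pointwise quadratic bound
  have hquad : ∀ ω, Real.exp (c * (δ - σ * Y ω)) ≤
      1 + c * (δ - σ * Y ω) + (1 + δ) / 2 * (c * (δ - σ * Y ω)) ^ 2 := by
    intro ω
    apply my_exp_quad hδ0.le hδ1
    have h1 : δ - σ * Y ω ≤ 1 + δ := (abs_le.1 (hXb ω)).2
    have : c * (δ - σ * Y ω) ≤ c * (1 + δ) := by
      exact mul_le_mul_of_nonneg_left h1 hc0
    rw [hc] at this ⊢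
    nlinarith
  have hintExp : Integrable (fun ω => Real.exp (c * (δ - σ * Y ω))) μ := by
    refine (integrable_const (Real.exp 1)).mono'
      ((hXmeas.const_mul c).exp).aestronglyMeasurable ?_
    refine Filter.Eventually.of_forall fun ω => ?_
    rw [Real.norm_eq_abs, abs_of_pos (Real.exp_pos _), Real.exp_le_exp]
    have h1 : δ - σ * Y ω ≤ 1 + δ := (abs_le.1 (hXb ω)).2
    have : c * (δ - σ * Y ω) ≤ c * (1 + δ) := mul_le_mul_of_nonneg_left h1 hc0
    rw [hc] at this; nlinarith
  have hRHSint : Integrable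
      (fun ω => 1 + c * (δ - σ * Y ω) + (1 + δ) / 2 * (c * (δ - σ * Y ω)) ^ 2) μ := by
    have : (fun ω => 1 + c * (δ - σ * Y ω) + (1 + δ) / 2 * (c * (δ - σ * Y ω)) ^ 2) =
        (fun ω => 1 + c * (δ - σ * Y ω) + ((1 + δ) / 2 * c ^ 2) * (δ - σ * Y ω) ^ 2) := by
      funext ω; ring
    rw [this]
    exact ((integrable_const _).add (hXint.const_mul c)).add (hX2int.const_mul _)
  -- integral computations
  have hXmean : ∫ ω, (δ - σ * Y ω) ∂μ = 0 := by
    rw [integral_sub (integrable_const δ) (hYint.const_mul σ), integral_const,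
      integral_const_mul]
    simp [hmean]
  have hX2mean : ∫ ω, (δ - σ * Y ω) ^ 2 ∂μ ≤ 1 - δ ^ 2 := by
    have hexp : (fun ω => (δ - σ * Y ω) ^ 2) =
        fun ω => δ ^ 2 - 2 * δ * σ * Y ω + (Y ω) ^ 2 := by
      funext ω; nlinarith [hσsq]
    have hint1 : Integrable (fun ω => δ ^ 2 - 2 * δ * σ * Y ω) μ :=
      (integrable_const (δ ^ 2)).sub (hYint.const_mul (2 * δ * σ))
    have hint2 : Integrable (fun ω => 2 * δ * σ * Y ω) μ := hYint.const_mul (2 * δ * σ)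
    rw [hexp, integral_add hint1 hY2int,
      integral_sub (integrable_const (δ ^ 2)) hint2, integral_const,
      integral_const_mul]
    have hY2 : ∫ ω, (Y ω) ^ 2 ∂μ ≤ 1 := by
      calc ∫ ω, (Y ω) ^ 2 ∂μ ≤ ∫ _ω, (1 : ℝ) ∂μ := by
            apply integral_mono hY2int (integrable_const _)
            intro ω
            show Y ω ^ 2 ≤ (1:ℝ)
            nlinarith [abs_le.2 ⟨(hbdd ω).1, (hbdd ω).2⟩, abs_nonneg (Y ω),
              sq_abs (Y ω)]
        _ = 1 := by simp
    have hσY : 2 * δ * σ * ∫ ω, Y ω ∂μ = 2 * δ ^ 2 := by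
      nlinarith [hmean]
    simp only [smul_eq_mul, measure_univ, ENNReal.toReal_one, one_mul, probReal_univ] at *
    nlinarith
  -- assemble
  have h1 : mgf (fun ω => δ - σ * Y ω) μ c ≤ 1 + (1 + δ) / 2 * c ^ 2 * (1 - δ ^ 2) := by
    rw [mgf]
    calc ∫ ω, Real.exp (c * (δ - σ * Y ω)) ∂μ
        ≤ ∫ ω, (1 + c * (δ - σ * Y ω) + (1 + δ) / 2 * (c * (δ - σ * Y ω)) ^ 2) ∂μ :=
          integral_mono hintExp hRHSint fun ω => hquad ω
      _ = 1 + c * ∫ ω, (δ - σ * Y ω) ∂μ +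
          ((1 + δ) / 2 * c ^ 2) * ∫ ω, (δ - σ * Y ω) ^ 2 ∂μ := by
          have hre : (fun ω => 1 + c * (δ - σ * Y ω) + (1 + δ) / 2 * (c * (δ - σ * Y ω)) ^ 2) =
              (fun ω => 1 + c * (δ - σ * Y ω) + ((1 + δ) / 2 * c ^ 2) * (δ - σ * Y ω) ^ 2) := by
            funext ω; ring
          have hint3 : Integrable (fun ω => 1 + c * (δ - σ * Y ω)) μ :=
            (integrable_const (1:ℝ)).add (hXint.const_mul c)
          have hint4 : Integrable (fun ω => c * (δ - σ * Y ω)) μ := hXint.const_mul c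
          have hint5 : Integrable (fun ω => (1 + δ) / 2 * c ^ 2 * (δ - σ * Y ω) ^ 2) μ :=
            hX2int.const_mul ((1 + δ) / 2 * c ^ 2)
          rw [hre, integral_add hint3 hint5,
            integral_add (integrable_const (1:ℝ)) hint4, integral_const,
            integral_const_mul, integral_const_mul]
          simp
      _ ≤ 1 + (1 + δ) / 2 * c ^ 2 * (1 - δ ^ 2) := by
          rw [hXmean]
          have hcoef : (0:ℝ) ≤ (1 + δ) / 2 * c ^ 2 := by positivity
          nlinarith [mul_le_mul_of_nonneg_left hX2mean hcoef]
  calc mgf (fun ω => δ - σ * Y ω) μ c ≤ 1 + (1 + δ) / 2 * c ^ 2 * (1 - δ ^ 2) := h1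
    _ ≤ Real.exp ((1 + δ) / 2 * c ^ 2 * (1 - δ ^ 2)) := by
        have := Real.add_one_le_exp ((1 + δ) / 2 * c ^ 2 * (1 - δ ^ 2))
        linarith

set_option maxHeartbeats 1000000 in
lemma my_tail
    {Ω : Type*} {m : MeasurableSpace Ω} {μ : Measure Ω} [IsProbabilityMeasure μ]
    (Z W : ℕ → Ω → ℝ) (Δ : ℝ)
    (hZmeas : ∀ t : ℕ, Measurable (Z t))
    (hZbdd : ∀ t : ℕ, 1 ≤ t → ∀ ω, Z t ω ∈ Set.Icc (-1 : ℝ) 1)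
    (hiid : iIndepFun (fun t : ℕ => Z (t + 1)) μ)
    (hZmean : ∀ j : ℕ, 1 ≤ j → ∫ ω, Z j ω ∂μ = Δ)
    (hΔne : Δ ≠ 0) (hδ1 : |Δ| ≤ 1)
    (hWnonneg : ∀ t : ℕ, 1 ≤ t → ∀ᵐ ω ∂μ, 0 ≤ W t ω)
    (hlogW : ∀ᵐ ω ∂μ, ∀ t : ℕ, 1 ≤ t →
      (∑ j ∈ Finset.Icc 1 t, Z j ω) ^ 2 /
          (4 * ((∑ j ∈ Finset.Icc 1 t, (Z j ω) ^ 2) + |∑ j ∈ Finset.Icc 1 t, Z j ω|)) -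
        2 * Real.log (4 * t) ≤ Real.log (W t ω))
    {α : ℝ} (hα0 : 0 < α) (hα1 : α < 1) (t : ℕ)
    (hT1 : 128 / |Δ| ^ 2 * Real.log (256 / (α * |Δ| ^ 2)) ≤ (t : ℝ))
    (hT2 : 32 / |Δ| ^ 2 * Real.log (32 / |Δ| ^ 2) ≤ (t : ℝ)) :
    μ {ω | ((t : ℕ∞) < stopTime W α ω)} ≤ ENNReal.ofReal (1 / (t : ℝ) ^ 2) := by
  set δ : ℝ := |Δ| with hδdef
  have hδ0 : 0 < δ := abs_pos.2 hΔne
  have hδ2 : 0 < δ ^ 2 := by positivity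
  -- t is positive
  have hl32 : (0:ℝ) < Real.log (32 / δ ^ 2) := by
    apply Real.log_pos
    rw [lt_div_iff₀ hδ2]; nlinarith
  have htpos : (0:ℝ) < t := lt_of_lt_of_le (by positivity) hT2
  have ht1 : 1 ≤ t := by exact_mod_cast Nat.one_le_cast.2 (Nat.pos_of_ne_zero (by
    rintro rfl; simp at htpos))
  -- sign
  set σ : ℝ := if 0 ≤ Δ then 1 else -1 with hσdef
  have hσabs : |σ| = 1 := by rw [hσdef]; split_ifs <;> simp
  have hσΔ : σ * Δ = δ := by
    rw [hσdef, hδdef]; split_ifs with h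
    · rw [abs_of_nonneg h]; ring
    · rw [abs_of_neg (not_le.1 h)]; ring
  -- the centered family
  set X : ℕ → Ω → ℝ := fun i ω => δ - σ * Z (i + 1) ω with hXdef
  set c : ℝ := δ / 2 with hcdef
  have hc0 : 0 ≤ c := by positivity
  have hXmeas : ∀ i, Measurable (X i) := fun i =>
    measurable_const.sub ((hZmeas (i + 1)).const_mul σ)
  have hXindep : iIndepFun X μ := by
    have := hiid.comp (fun _ => fun x : ℝ => δ - σ * x)
      (fun _ => measurable_const.sub (measurable_id.const_mul σ))
    exact this
  have hXint : ∀ i, Integrable (fun ω => Real.exp (c * X i ω)) μ := by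
    intro i
    refine (integrable_const (Real.exp 1)).mono'
      (((hXmeas i).const_mul c).exp).aestronglyMeasurable ?_
    refine Filter.Eventually.of_forall fun ω => ?_
    rw [Real.norm_eq_abs, abs_of_pos (Real.exp_pos _), Real.exp_le_exp]
    have hb := hZbdd (i + 1) (Nat.le_add_left 1 i) ω
    have h1 : |σ * Z (i + 1) ω| ≤ 1 := by
      rw [abs_mul, hσabs, one_mul]; exact abs_le.2 ⟨hb.1, hb.2⟩
    have := abs_le.1 h1
    have hXival : X i ω = δ - σ * Z (i + 1) ω := rfl
    rw [hXival, hcdef]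
    nlinarith
  -- event inclusion
  have hSample : ∀ᵐ ω ∂μ, ω ∈ {ω | ((t : ℕ∞) < stopTime W α ω)} →
      ω ∈ {ω | δ * (t : ℝ) / 2 ≤ (∑ i ∈ Finset.range t, X i) ω} := by
    filter_upwards [hlogW, hWnonneg t ht1] with ω hlog hW0 hτ
    try simp only [Set.mem_setOf_eq] at hτ ⊢
    -- W t ω < 1/α
    have hWlt : W t ω < 1 / α := by
      by_contra hcon
      push_neg at hcon
      have hmem : ((t : ℕ∞)) ∈ {n : ℕ∞ | ∃ s : ℕ, n = (s : ℕ∞) ∧ 1 ≤ s ∧ 1 / α ≤ W s ω} :=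
        ⟨t, rfl, ht1, hcon⟩
      exact absurd (sInf_le hmem) (not_le.2 hτ)
    have h1α : (1:ℝ) < 1 / α := by rw [lt_div_iff₀ hα0]; linarith
    have hlogα : Real.log (W t ω) < Real.log (1 / α) := by
      rcases eq_or_lt_of_le hW0 with h0 | h0
      · rw [← h0, Real.log_zero]; exact Real.log_pos h1α
      · exact Real.log_lt_log h0 hWlt
    have hLB := hlog t ht1
    set A : ℝ := ∑ j ∈ Finset.Icc 1 t, Z j ω with hAdef
    set V : ℝ := ∑ j ∈ Finset.Icc 1 t, (Z j ω) ^ 2 with hVdef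
    -- |A| < δ t / 2
    have hA : |A| < δ * (t : ℝ) / 2 := by
      by_contra hge
      push_neg at hge
      have hVnonneg : 0 ≤ V := Finset.sum_nonneg fun j _ => sq_nonneg _
      have hVle : V ≤ (t : ℝ) := by
        calc V ≤ ∑ _j ∈ Finset.Icc 1 t, (1:ℝ) := by
              apply Finset.sum_le_sum
              intro j hj
              have hb := hZbdd j (Finset.mem_Icc.1 hj).1 ω
              nlinarith [hb.1, hb.2]
          _ = (t : ℝ) := by simp
      have hApos : 0 < |A| := lt_of_lt_of_le (by positivity) hge
      have hden : 0 < 4 * (V + |A|) := by nlinarith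
      have hfrac : δ ^ 2 * (t : ℝ) / 32 ≤ A ^ 2 / (4 * (V + |A|)) := by
        have hAle : |A| ≤ (t : ℝ) := by
          calc |A| ≤ ∑ j ∈ Finset.Icc 1 t, |Z j ω| := Finset.abs_sum_le_sum_abs _ _
            _ ≤ ∑ _j ∈ Finset.Icc 1 t, (1:ℝ) := by
                apply Finset.sum_le_sum
                intro j hj
                have hb := hZbdd j (Finset.mem_Icc.1 hj).1 ω
                exact abs_le.2 ⟨hb.1, hb.2⟩
            _ = (t : ℝ) := by simp
        calc δ ^ 2 * (t : ℝ) / 32 = (δ * (t : ℝ) / 2) ^ 2 / (8 * (t : ℝ)) := by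
              field_simp; ring
          _ ≤ A ^ 2 / (8 * (t : ℝ)) := by
              have hnum2 : (δ * (t : ℝ) / 2) ^ 2 ≤ A ^ 2 := by
                rw [← sq_abs A]
                exact pow_le_pow_left₀ (by positivity) hge 2
              exact div_le_div_of_nonneg_right hnum2 (by positivity)
          _ ≤ A ^ 2 / (4 * (V + |A|)) := by
              have hle : 4 * (V + |A|) ≤ 8 * (t : ℝ) := by nlinarith
              exact div_le_div_of_nonneg_left (sq_nonneg A) hden hle
      have hnum := my_calc1 hα0 hα1 hδ0 hδ1 hT1
      linarith
    -- conclude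
    have hsum : (∑ i ∈ Finset.range t, X i) ω = (t : ℝ) * δ - σ * A := by
      rw [Finset.sum_apply]
      have hre : ∀ i, X i ω = δ - σ * Z (i + 1) ω := fun i => rfl
      simp only [hre]
      rw [Finset.sum_sub_distrib, Finset.sum_const, Finset.card_range, ← Finset.mul_sum]
      have hA_range : A = ∑ i ∈ Finset.range t, Z (i + 1) ω := by
        rw [hAdef, ← Finset.Ico_add_one_right_eq_Icc, Finset.sum_Ico_eq_sum_range]
        simp [add_comm]
      rw [hA_range]
      push_cast
      ring
    have hσA : σ * A ≤ |A| := by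
      calc σ * A ≤ |σ * A| := le_abs_self _
        _ = |A| := by rw [abs_mul, hσabs, one_mul]
    rw [hsum]
    linarith
  -- Chernoff bound
  have hκ : ∀ i ∈ Finset.range t, mgf (X i) μ c ≤
      Real.exp ((1 + δ) / 2 * (δ / 2) ^ 2 * (1 - δ ^ 2)) := by
    intro i _
    have hmean : σ * ∫ ω, Z (i + 1) ω ∂μ = δ := by
      rw [hZmean (i + 1) (Nat.le_add_left 1 i), hσΔ]
    exact my_mgf_one (hZmeas (i + 1)) (hZbdd (i + 1) (Nat.le_add_left 1 i))
      hδ0 hδ1 hσabs hmean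
  have hch := measure_ge_le_exp_mul_mgf (μ := μ) (X := ∑ i ∈ Finset.range t, X i)
    (δ * (t : ℝ) / 2) hc0 (hXindep.integrable_exp_mul_sum hXmeas fun i _ => hXint i)
  rw [hXindep.mgf_sum hXmeas] at hch
  have hprod : ∏ i ∈ Finset.range t, mgf (X i) μ c ≤
      Real.exp ((1 + δ) / 2 * (δ / 2) ^ 2 * (1 - δ ^ 2)) ^ t := by
    calc ∏ i ∈ Finset.range t, mgf (X i) μ c
        ≤ ∏ _i ∈ Finset.range t, Real.exp ((1 + δ) / 2 * (δ / 2) ^ 2 * (1 - δ ^ 2)) :=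
          Finset.prod_le_prod (fun i _ => mgf_nonneg) hκ
      _ = _ := by rw [Finset.prod_const, Finset.card_range]
  have htoReal : (μ {ω | δ * (t : ℝ) / 2 ≤ (∑ i ∈ Finset.range t, X i) ω}).toReal ≤
      1 / (t : ℝ) ^ 2 := by
    have h1 : (μ {ω | δ * (t : ℝ) / 2 ≤ (∑ i ∈ Finset.range t, X i) ω}).toReal ≤
        Real.exp (-c * (δ * (t : ℝ) / 2)) *
          Real.exp ((1 + δ) / 2 * (δ / 2) ^ 2 * (1 - δ ^ 2)) ^ t := by
      calc (μ {ω | δ * (t : ℝ) / 2 ≤ (∑ i ∈ Finset.range t, X i) ω}).toReal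
          ≤ Real.exp (-c * (δ * (t : ℝ) / 2)) * ∏ i ∈ Finset.range t, mgf (X i) μ c := hch
        _ ≤ _ := by
            apply mul_le_mul_of_nonneg_left hprod (le_of_lt (Real.exp_pos _))
    have h2 : Real.exp (-c * (δ * (t : ℝ) / 2)) *
        Real.exp ((1 + δ) / 2 * (δ / 2) ^ 2 * (1 - δ ^ 2)) ^ t ≤
        Real.exp (-(3 * δ ^ 2 / 32) * (t : ℝ)) := by
      rw [← Real.exp_nat_mul, ← Real.exp_add, Real.exp_le_exp]
      have hunit : (1 + δ) / 2 * (δ / 2) ^ 2 * (1 - δ ^ 2) - c * δ / 2 ≤ -(3 * δ ^ 2 / 32) := by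
        rw [hcdef]
        nlinarith [mul_nonneg (sq_nonneg (δ - 1/3)) (by linarith : (0:ℝ) ≤ δ + 5/3)]
      have htnn : (0:ℝ) ≤ (t : ℝ) := htpos.le
      nlinarith [mul_le_mul_of_nonneg_left hunit htnn]
    exact h1.trans (h2.trans (my_calc2 hδ0 hδ1 hT2))
  calc μ {ω | ((t : ℕ∞) < stopTime W α ω)}
      ≤ μ {ω | δ * (t : ℝ) / 2 ≤ (∑ i ∈ Finset.range t, X i) ω} := by
        apply measure_mono_ae
        exact hSample
    _ = ENNReal.ofReal
        ((μ {ω | δ * (t : ℝ) / 2 ≤ (∑ i ∈ Finset.range t, X i) ω}).toReal) :=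
        (ENNReal.ofReal_toReal (measure_ne_top μ _)).symm
    _ ≤ ENNReal.ofReal (1 / (t : ℝ) ^ 2) := ENNReal.ofReal_le_ofReal htoReal

/-- **Expected stopping time of the single-stream ONS test.**  If `(Z t)_{t ≥ 1}` are i.i.d.
`[-1,1]`-valued with mean `Δ ≠ 0`, and `(W t)_{t ≥ 1}` is a nonnegative process satisfying
the ONS logarithmic-wealth lower bound
`ln (W t) ≥ A t ^ 2 / (4 (V t + |A t|)) - 2 ln (4 t)`
(where `A t = ∑_{j=1}^t Z j` and `V t = ∑_{j=1}^t (Z j)^2`), then for every `α ∈ (0,1)`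
the stopping time `τ = inf {t ≥ 1 : W t ≥ 1/α}` satisfies
`E[τ] ≤ (128/Δ²) ln (256/(α Δ²)) + (32/Δ²) ln (32/Δ²) + π²/6`. -/
theorem ons_test_expected_stopping_time
    {Ω : Type*} {m : MeasurableSpace Ω} {μ : Measure Ω} [IsProbabilityMeasure μ]
    (Z W : ℕ → Ω → ℝ) (Δ : ℝ)
    (hZmeas : ∀ t : ℕ, Measurable (Z t))
    (hZbdd : ∀ t : ℕ, 1 ≤ t → ∀ ω, Z t ω ∈ Set.Icc (-1 : ℝ) 1)
    (hiid : iIndepFun (fun t : ℕ => Z (t + 1)) μ)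
    (hident : ∀ t : ℕ, 1 ≤ t → IdentDistrib (Z t) (Z 1) μ μ)
    (hΔ : Δ = ∫ ω, Z 1 ω ∂μ) (hΔne : Δ ≠ 0)
    (hWmeas : ∀ t : ℕ, Measurable (W t))
    (hWnonneg : ∀ t : ℕ, 1 ≤ t → ∀ᵐ ω ∂μ, 0 ≤ W t ω)
    (hlogW : ∀ᵐ ω ∂μ, ∀ t : ℕ, 1 ≤ t →
      (∑ j ∈ Finset.Icc 1 t, Z j ω) ^ 2 /
          (4 * ((∑ j ∈ Finset.Icc 1 t, (Z j ω) ^ 2) + |∑ j ∈ Finset.Icc 1 t, Z j ω|)) -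
        2 * Real.log (4 * t) ≤ Real.log (W t ω))
    {α : ℝ} (hα : α ∈ Set.Ioo (0 : ℝ) 1) :
    expStopTime μ W α ≤
      ENNReal.ofReal ((128 / Δ ^ 2) * Real.log (256 / (α * Δ ^ 2)) +
        (32 / Δ ^ 2) * Real.log (32 / Δ ^ 2) + Real.pi ^ 2 / 6) := by
  obtain ⟨hα0, hα1⟩ := hα
  rw [← sq_abs Δ]
  have hδ0 : 0 < |Δ| := abs_pos.2 hΔne
  have hδ2 : 0 < |Δ| ^ 2 := by positivity
  -- mean and boundedness facts
  have hZ1int : Integrable (Z 1) μ := by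
    refine (integrable_const (1 : ℝ)).mono' (hZmeas 1).aestronglyMeasurable ?_
    exact Filter.Eventually.of_forall fun ω => by
      rw [Real.norm_eq_abs]; exact abs_le.2 ⟨(hZbdd 1 le_rfl ω).1, (hZbdd 1 le_rfl ω).2⟩
  have hZmean : ∀ j : ℕ, 1 ≤ j → ∫ ω, Z j ω ∂μ = Δ := by
    intro j hj
    rw [(hident j hj).integral_eq, hΔ]
  have hδ1 : |Δ| ≤ 1 := by
    rw [hΔ]
    calc |∫ ω, Z 1 ω ∂μ| = ‖∫ ω, Z 1 ω ∂μ‖ := (Real.norm_eq_abs _).symm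
      _ ≤ ∫ ω, ‖Z 1 ω‖ ∂μ := norm_integral_le_integral_norm _
      _ ≤ ∫ _ω, (1 : ℝ) ∂μ := by
          apply integral_mono hZ1int.norm (integrable_const _)
          intro ω
          show ‖Z 1 ω‖ ≤ (1:ℝ)
          rw [Real.norm_eq_abs]
          exact abs_le.2 ⟨(hZbdd 1 le_rfl ω).1, (hZbdd 1 le_rfl ω).2⟩
      _ = 1 := by simp
  set T1 : ℝ := 128 / |Δ| ^ 2 * Real.log (256 / (α * |Δ| ^ 2)) with hT1def
  set T2 : ℝ := 32 / |Δ| ^ 2 * Real.log (32 / |Δ| ^ 2) with hT2def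
  have hT1nonneg : 0 ≤ T1 := by
    apply mul_nonneg (by positivity)
    apply Real.log_nonneg
    rw [le_div_iff₀ (by positivity)]
    nlinarith
  have hT2nonneg : 0 ≤ T2 := by
    apply mul_nonneg (by positivity)
    apply Real.log_nonneg
    rw [le_div_iff₀ hδ2]
    nlinarith
  set N : ℕ := ⌊T1⌋₊ + ⌊T2⌋₊ with hNdef
  -- pointwise bound on the summands
  have hbound : ∀ n : ℕ,
      μ {ω | ((n + 1 : ℕ) : ℕ∞) < stopTime W α ω} ≤
        (if n < N then 1 else 0) + ENNReal.ofReal (1 / ((n : ℝ) + 1) ^ 2) := by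
    intro n
    by_cases hn : n < N
    · rw [if_pos hn]
      exact le_trans prob_le_one le_self_add
    · rw [if_neg hn]
      push_neg at hn
      have hT1n : T1 ≤ ((n + 1 : ℕ) : ℝ) := by
        have h1 : T1 < (⌊T1⌋₊ : ℝ) + 1 := Nat.lt_floor_add_one T1
        have h2 : (⌊T1⌋₊ : ℝ) ≤ (N : ℝ) := by
          exact_mod_cast Nat.le_add_right _ _
        have h3 : (N : ℝ) ≤ (n : ℝ) := by exact_mod_cast hn
        push_cast
        linarith
      have hT2n : T2 ≤ ((n + 1 : ℕ) : ℝ) := by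
        have h1 : T2 < (⌊T2⌋₊ : ℝ) + 1 := Nat.lt_floor_add_one T2
        have h2 : (⌊T2⌋₊ : ℝ) ≤ (N : ℝ) := by
          exact_mod_cast Nat.le_add_left _ _
        have h3 : (N : ℝ) ≤ (n : ℝ) := by exact_mod_cast hn
        push_cast
        linarith
      have := my_tail Z W Δ hZmeas hZbdd hiid hZmean hΔne hδ1 hWnonneg hlogW
        hα0 hα1 (n + 1) hT1n hT2n
      refine le_trans this ?_
      have : ((n + 1 : ℕ) : ℝ) = (n : ℝ) + 1 := by push_cast; ring
      rw [this]
      exact le_add_self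
  -- sum the bounds
  have hsum1 : (∑' n : ℕ, (if n < N then (1 : ℝ≥0∞) else 0)) = N := by
    rw [tsum_eq_sum (s := Finset.range N) (fun b hb => if_neg (by simpa using hb))]
    rw [Finset.sum_congr rfl (fun b hb => if_pos (Finset.mem_range.1 hb))]
    simp
  have hbasel : HasSum (fun n : ℕ => 1 / ((n : ℝ) + 1) ^ 2) (Real.pi ^ 2 / 6) := by
    have h0 := hasSum_zeta_two
    have h1 := (hasSum_nat_add_iff' (f := fun n : ℕ => (1 : ℝ) / (n : ℝ) ^ 2) 1).2 h0
    simp only [Finset.range_one, Finset.sum_singleton, Nat.cast_zero] at h1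
    norm_num at h1
    convert h1 using 2 with n
    push_cast
    case e'_3 => rfl
    ring
  have hsum2 : (∑' n : ℕ, ENNReal.ofReal (1 / ((n : ℝ) + 1) ^ 2)) =
      ENNReal.ofReal (Real.pi ^ 2 / 6) := by
    rw [← ENNReal.ofReal_tsum_of_nonneg (fun n => by positivity) hbasel.summable,
      hbasel.tsum_eq]
  calc expStopTime μ W α
      ≤ ∑' n : ℕ, ((if n < N then (1 : ℝ≥0∞) else 0) + ENNReal.ofReal (1 / ((n : ℝ) + 1) ^ 2)) :=
        ENNReal.tsum_le_tsum hbound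
    _ = (N : ℝ≥0∞) + ENNReal.ofReal (Real.pi ^ 2 / 6) := by
        rw [ENNReal.tsum_add, hsum1, hsum2]
    _ ≤ ENNReal.ofReal (T1 + T2 + Real.pi ^ 2 / 6) := by
        have hN : (N : ℝ) ≤ T1 + T2 := by
          rw [hNdef]
          push_cast
          exact add_le_add (Nat.floor_le hT1nonneg) (Nat.floor_le hT2nonneg)
        calc (N : ℝ≥0∞) + ENNReal.ofReal (Real.pi ^ 2 / 6)
            = ENNReal.ofReal (N : ℝ) + ENNReal.ofReal (Real.pi ^ 2 / 6) := by
              rw [ENNReal.ofReal_natCast]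
          _ ≤ ENNReal.ofReal (T1 + T2) + ENNReal.ofReal (Real.pi ^ 2 / 6) := by
              exact add_le_add_left (ENNReal.ofReal_le_ofReal hN) _
          _ = ENNReal.ofReal (T1 + T2 + Real.pi ^ 2 / 6) := by
              rw [← ENNReal.ofReal_add (by linarith) (by positivity)]
end

section
/- Expected stopping time of the multivariate ONS test: Let (Z⃗_t)_{t≥1} be i.i.d. random vectors taking values in [−1,1]^k, and suppose Δ_m := ‖E[Z⃗_1]‖_∞ > 0. Let (W_t)_{t≥1} be a nonnegative stochastic process satisfying, almost surely for all t ≥ 1 and all u ∈ ℝ^k with ‖u‖₁ = 1, ln(W_t) ≥ (1/4) · (Σ_{j=1}^t ⟨u, Z⃗_j⟩)² / (Σ_{j=1}^t ⟨u, Z⃗_j⟩² + |Σ_{j=1}^t ⟨u, Z⃗_j⟩|) − 2k ln(4t). Then for every α ∈ (0,1) the stopping time τ = inf{t ≥ 1 : W_t ≥ 1/α} satisfies E[τ] ≤ (288k/Δ_m²) ln(576k/Δ_m²) + (72/Δ_m²) ln(72/Δ_m²) + (72/Δ_m²) ln(1/α) + π²/6. -/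
open MeasureTheory ProbabilityTheory
open scoped ENNReal

section AuxLemmas
open Real


lemma my_exp_le {y : ℝ} (hy : |y| ≤ 1) : Real.exp y ≤ 1 + y + y ^ 2 := by
  have h := Real.exp_bound hy (n := 2) (by norm_num)
  have h2 : ∑ m ∈ Finset.range 2, y ^ m / (m.factorial : ℝ) = 1 + y := by
    simp [Finset.sum_range_succ]
  rw [h2] at h
  have h4 : |y| ^ 2 = y ^ 2 := sq_abs y
  have h5 : ((Nat.succ 2 : ℕ) : ℝ) / ((Nat.factorial 2 : ℕ) * (2:ℕ) : ℝ) = 3/4 := by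
    norm_num [Nat.factorial]
  rw [h4, h5] at h
  have := (abs_le.1 h).2
  nlinarith [sq_nonneg y]

lemma my_integrable {Ω : Type*} {m : MeasurableSpace Ω} (μ : Measure Ω) [IsFiniteMeasure μ]
    {g : Ω → ℝ} (C : ℝ) (hm : Measurable g) (hb : ∀ ω, |g ω| ≤ C) : Integrable g μ :=
  (integrable_const C).mono' hm.aestronglyMeasurable (ae_of_all _ fun ω => by
    simpa using hb ω)

lemma icc_sum_eq {M : Type*} [AddCommMonoid M] (n : ℕ) (f : ℕ → M) :
    ∑ j ∈ Finset.Icc 1 n, f j = ∑ t ∈ Finset.range n, f (t + 1) := by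
  induction n with
  | zero => simp
  | succ n ih => rw [Finset.sum_Icc_succ_top (by omega), ih, Finset.sum_range_succ]

lemma my_chernoff {Ω : Type*} {m : MeasurableSpace Ω} {μ : Measure Ω} [IsProbabilityMeasure μ]
    (X : ℕ → Ω → ℝ) (Δ : ℝ) (hΔ : 0 < Δ) (hΔ1 : Δ ≤ 1)
    (hmeas : ∀ t, Measurable (X t))
    (hbdd : ∀ t, 1 ≤ t → ∀ ω, |X t ω| ≤ 1)
    (hindep : iIndepFun (fun t => X (t + 1)) μ)
    (hident : ∀ t : ℕ, IdentDistrib (X (t + 1)) (X 1) μ μ)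
    (hmean : ∫ ω, X 1 ω ∂μ = Δ)
    (n : ℕ) :
    μ {ω | ∑ j ∈ Finset.Icc 1 n, X j ω ≤ Δ * n / 2} ≤
      ENNReal.ofReal (Real.exp (-(Δ ^ 2) * n / 16)) := by
  set l : ℝ := Δ / 4 with hl
  have hlpos : 0 < l := by positivity
  have hl1 : l ≤ 1 := by rw [hl]; linarith
  -- the sum as a range sum
  have hS : ∀ ω, ∑ j ∈ Finset.Icc 1 n, X j ω = ∑ t ∈ Finset.range n, X (t + 1) ω := by
    intro ω; exact icc_sum_eq n (fun j => X j ω)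
  set S : Ω → ℝ := fun ω => ∑ t ∈ Finset.range n, X (t + 1) ω with hSdef
  have hSmeas : Measurable S := by
    apply Finset.measurable_sum
    intro t _; exact hmeas (t + 1)
  have hSbdd : ∀ ω, |S ω| ≤ n := by
    intro ω
    calc |S ω| ≤ ∑ t ∈ Finset.range n, |X (t + 1) ω| := Finset.abs_sum_le_sum_abs _ _
    _ ≤ ∑ _t ∈ Finset.range n, (1 : ℝ) := by
        apply Finset.sum_le_sum; intro t _; exact hbdd (t + 1) (by omega) ω
    _ = n := by simp
  have hint : Integrable (fun ω => Real.exp (-l * S ω)) μ := by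
    apply my_integrable μ (Real.exp (l * n))
    · exact (hSmeas.const_mul _).exp
    · intro ω
      rw [abs_of_nonneg (Real.exp_nonneg _)]
      apply Real.exp_le_exp.2
      have := (abs_le.1 (hSbdd ω)).1
      nlinarith
  have key := measure_le_le_exp_mul_mgf (μ := μ) (X := S) (t := -l) (Δ * n / 2)
    (by linarith) hint
  -- mgf of sum equals product
  have hmgf_sum : mgf S μ (-l) = (mgf (X 1) μ (-l)) ^ n := by
    have hSe : S = ∑ t ∈ Finset.range n, (fun ω => X (t + 1) ω) := by
      funext ω; rw [Finset.sum_apply]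
    have h1 : mgf S μ (-l) = ∏ t ∈ Finset.range n, mgf (X (t + 1)) μ (-l) := by
      rw [hSe]
      exact iIndepFun.mgf_sum hindep (fun t => hmeas (t + 1)) (Finset.range n)
    rw [h1]
    have h2 : ∀ t ∈ Finset.range n, mgf (X (t + 1)) μ (-l) = mgf (X 1) μ (-l) := by
      intro t _
      unfold mgf
      exact ((hident t).comp (by fun_prop : Measurable fun x : ℝ => Real.exp (-l * x))).integral_eq
    rw [Finset.prod_congr rfl h2, Finset.prod_const, Finset.card_range]
  -- bound the single mgf
  have hX1bdd := hbdd 1 le_rfl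
  have hmgf1 : mgf (X 1) μ (-l) ≤ Real.exp (l ^ 2 - l * Δ) := by
    have hpt : ∀ ω, Real.exp (-l * X 1 ω) ≤ 1 + (-l) * X 1 ω + l ^ 2 * (X 1 ω) ^ 2 := by
      intro ω
      have h := my_exp_le (y := -l * X 1 ω) (by
        rw [abs_mul, abs_neg, abs_of_pos hlpos]
        calc l * |X 1 ω| ≤ 1 * 1 := by
              apply mul_le_mul hl1 (hX1bdd ω) (abs_nonneg _) zero_le_one
        _ = 1 := by ring)
      calc Real.exp (-l * X 1 ω) ≤ 1 + (-l * X 1 ω) + (-l * X 1 ω) ^ 2 := h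
        _ = 1 + (-l) * X 1 ω + l ^ 2 * (X 1 ω) ^ 2 := by ring
    have hintL : Integrable (fun ω => Real.exp (-l * X 1 ω)) μ := by
      apply my_integrable μ (Real.exp l)
      · exact ((hmeas 1).const_mul _).exp
      · intro ω
        rw [abs_of_nonneg (Real.exp_nonneg _)]
        apply Real.exp_le_exp.2
        have := (abs_le.1 (hX1bdd ω)).1
        nlinarith
    have hintR : Integrable (fun ω => 1 + (-l) * X 1 ω + l ^ 2 * (X 1 ω) ^ 2) μ := by
      apply my_integrable μ (1 + l + l ^ 2)
      · exact (measurable_const.add ((hmeas 1).const_mul _)).add (((hmeas 1).pow_const 2).const_mul _)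
      · intro ω
        have h1 := abs_le.1 (hX1bdd ω)
        have h2 : (X 1 ω) ^ 2 ≤ 1 := by nlinarith [h1.1, h1.2]
        have h3 : |(-l) * X 1 ω| ≤ l := by
          rw [abs_mul, abs_neg, abs_of_pos hlpos]
          calc l * |X 1 ω| ≤ l * 1 := by
                exact mul_le_mul_of_nonneg_left (hX1bdd ω) hlpos.le
          _ = l := by ring
        have h4 := abs_le.1 h3
        rw [abs_le]
        constructor <;> nlinarith [sq_nonneg (X 1 ω), sq_nonneg l]
    have hintX : Integrable (X 1) μ := my_integrable μ 1 (hmeas 1) hX1bdd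
    have hintX2 : Integrable (fun ω => (X 1 ω) ^ 2) μ := by
      apply my_integrable μ 1 ((hmeas 1).pow_const 2)
      intro ω
      have h1 := abs_le.1 (hX1bdd ω)
      rw [abs_le]; constructor <;> nlinarith [h1.1, h1.2]
    have hEX2 : ∫ ω, (X 1 ω) ^ 2 ∂μ ≤ 1 := by
      calc ∫ ω, (X 1 ω) ^ 2 ∂μ ≤ ∫ _ω, (1 : ℝ) ∂μ := by
            apply integral_mono hintX2 (integrable_const 1)
            intro ω
            have h1 := abs_le.1 (hX1bdd ω)
            show X 1 ω ^ 2 ≤ 1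
            nlinarith [h1.1, h1.2]
      _ = 1 := by simp
    calc mgf (X 1) μ (-l) = ∫ ω, Real.exp (-l * X 1 ω) ∂μ := rfl
      _ ≤ ∫ ω, (1 + (-l) * X 1 ω + l ^ 2 * (X 1 ω) ^ 2) ∂μ :=
          integral_mono hintL hintR hpt
      _ = (∫ ω, (1 + (-l) * X 1 ω) ∂μ) + ∫ ω, l ^ 2 * (X 1 ω) ^ 2 ∂μ :=
          integral_add ((integrable_const 1).add (hintX.const_mul _)) (hintX2.const_mul _)
      _ = ((∫ _ω, (1:ℝ) ∂μ) + ∫ ω, (-l) * X 1 ω ∂μ) + ∫ ω, l ^ 2 * (X 1 ω) ^ 2 ∂μ := by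
          rw [integral_add (integrable_const 1) (hintX.const_mul _)]
      _ = 1 + (-l) * ∫ ω, X 1 ω ∂μ + l ^ 2 * ∫ ω, (X 1 ω) ^ 2 ∂μ := by
          rw [integral_const_mul, integral_const_mul, integral_const]
          simp
      _ ≤ 1 + (l ^ 2 - l * Δ) := by
          rw [hmean]
          nlinarith [sq_nonneg l]
      _ ≤ Real.exp (l ^ 2 - l * Δ) := by
          have := Real.add_one_le_exp (l ^ 2 - l * Δ)
          linarith
  have hfin : μ {ω | S ω ≤ Δ * n / 2} ≠ ⊤ := measure_ne_top _ _
  have hbound : (μ {ω | S ω ≤ Δ * n / 2}).toReal ≤ Real.exp (-(Δ ^ 2) * n / 16) := by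
    calc (μ {ω | S ω ≤ Δ * ↑n / 2}).toReal ≤ Real.exp (- -l * (Δ * ↑n / 2)) * mgf S μ (-l) := key
      _ ≤ Real.exp (l * (Δ * n / 2)) * (Real.exp (l ^ 2 - l * Δ)) ^ n := by
          rw [hmgf_sum]
          have h6 : - -l * (Δ * ↑n / 2) = l * (Δ * n / 2) := by ring
          rw [h6]
          exact mul_le_mul_of_nonneg_left (pow_le_pow_left₀ mgf_nonneg hmgf1 n)
            (Real.exp_nonneg _)
      _ = Real.exp (l * (Δ * n / 2) + n * (l ^ 2 - l * Δ)) := by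
          rw [← Real.exp_nat_mul, ← Real.exp_add]
      _ = Real.exp (-(Δ ^ 2) * n / 16) := by
          congr 1; rw [hl]; ring
  have hset : {ω | ∑ j ∈ Finset.Icc 1 n, X j ω ≤ Δ * n / 2} = {ω | S ω ≤ Δ * n / 2} := by
    ext ω; simp only [Set.mem_setOf_eq, hS ω, hSdef]
  rw [hset, ← ENNReal.ofReal_toReal hfin]
  exact ENNReal.ofReal_le_ofReal hbound

lemma my_log_le {x s : ℝ} (hx : 0 < x) (hs : 0 < s) : Real.log x ≤ x / s + Real.log s := by
  have h1 : Real.log x = Real.log (x / s) + Real.log s := by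
    rw [Real.log_div hx.ne' hs.ne']; ring
  have h2 : Real.log (x / s) ≤ x / s - 1 := Real.log_le_sub_one_of_pos (div_pos hx hs)
  linarith

set_option maxHeartbeats 1000000 in
lemma my_threshold (k : ℕ) (Δ α : ℝ) (hk : (1:ℝ) ≤ (k:ℝ)) (hΔ : 0 < Δ) (hΔ1 : Δ ≤ 1)
    (hα : 0 < α) (hα1 : α < 1) (n : ℕ) (hn1 : 1 ≤ n)
    (hn : 288 * (k:ℝ) / Δ ^ 2 * Real.log (576 * (k:ℝ) / Δ ^ 2) +
        72 / Δ ^ 2 * Real.log (72 / Δ ^ 2) + 72 / Δ ^ 2 * Real.log (1 / α) ≤ (n:ℝ)) :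
    Real.log (1 / α) + 2 * (k:ℝ) * Real.log (4 * (n:ℝ)) ≤ Δ ^ 2 * (n:ℝ) / 32 ∧
    2 * Real.log (n:ℝ) ≤ Δ ^ 2 * (n:ℝ) / 16 := by
  set K : ℝ := (k:ℝ) with hK
  set D : ℝ := Δ ^ 2 with hD
  set L : ℝ := Real.log (1 / α) with hLdef
  have hKpos : (0:ℝ) < K := lt_of_lt_of_le one_pos hk
  have hD0 : 0 < D := by rw [hD]; positivity
  have hD1 : D ≤ 1 := by rw [hD]; nlinarith
  have hN1 : (1:ℝ) ≤ (n:ℝ) := by exact_mod_cast hn1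
  have hNpos : (0:ℝ) < (n:ℝ) := by linarith
  have hL : 0 < L := Real.log_pos (one_lt_one_div hα hα1)
  set a1 : ℝ := Real.log (576 * K / D) with ha1
  set a1' : ℝ := Real.log (512 * K / D) with ha1'
  set a2 : ℝ := Real.log (72 / D) with ha2
  set a2' : ℝ := Real.log (64 / D) with ha2'
  have h512pos : (0:ℝ) < 512 * K / D := by positivity
  have h64pos : (0:ℝ) < 64 / D := by positivity
  have ha1m : a1' ≤ a1 := Real.log_le_log h512pos (by gcongr; norm_num)
  have ha2m : a2' ≤ a2 := Real.log_le_log h64pos (by gcongr; norm_num)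
  have ha1nn : 0 ≤ a1 := Real.log_nonneg (by rw [le_div_iff₀ hD0]; nlinarith)
  have ha1nn' : 0 ≤ a1' := Real.log_nonneg (by rw [le_div_iff₀ hD0]; nlinarith)
  have ha2nn : 0 ≤ a2 := Real.log_nonneg (by rw [le_div_iff₀ hD0]; nlinarith)
  have ha2nn' : 0 ≤ a2' := Real.log_nonneg (by rw [le_div_iff₀ hD0]; nlinarith)
  -- multiplied hypothesis
  have hn' : 288 * K * a1 + 72 * a2 + 72 * L ≤ D * n := by
    have h := mul_le_mul_of_nonneg_left hn hD0.le
    have e : D * (288 * K / D * a1 + 72 / D * a2 + 72 / D * L)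
        = 288 * K * a1 + 72 * a2 + 72 * L := by
      field_simp
    rw [e] at h
    linarith
  constructor
  · -- part (a)
    have s1 : Real.log (4 * n) ≤ 4 * n / (512 * K / D) + a1' :=
      my_log_le (by positivity) h512pos
    have s1' : 2 * K * Real.log (4 * n) ≤ D * n / 64 + 2 * (K * a1') := by
      have h := mul_le_mul_of_nonneg_left s1 (show (0:ℝ) ≤ 2 * K by positivity)
      have e : 2 * K * (4 * n / (512 * K / D) + a1') = D * n / 64 + 2 * (K * a1') := by
        field_simp
        ring
      rw [e] at h
      linarith
    have hKa : K * a1' ≤ K * a1 := mul_le_mul_of_nonneg_left ha1m hKpos.le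
    have hKa0 : 0 ≤ K * a1' := mul_nonneg hKpos.le ha1nn'
    linarith
  · -- part (b)
    have s2 : Real.log n ≤ (n:ℝ) / (64 / D) + a2' := my_log_le hNpos h64pos
    have e : (n:ℝ) / (64 / D) = D * n / 64 := by
      rw [div_div_eq_mul_div]; ring
    have hKa0 : 0 ≤ K * a1 := mul_nonneg hKpos.le ha1nn
    linarith

end AuxLemmas

set_option maxHeartbeats 2000000 in
/-- **Expected stopping time of the multivariate ONS test.**  Let `(Z t)_{t ≥ 1}` be i.i.d.
random vectors in `[-1,1]^k` with `Δm = ‖E[Z 1]‖_∞ > 0`, and let `(W t)_{t ≥ 1}` be a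
nonnegative process satisfying, almost surely for all `t ≥ 1` and all `u` with `‖u‖₁ = 1`,
`ln (W t) ≥ (1/4) (∑_{j≤t} ⟪u, Z j⟫)² / (∑_{j≤t} ⟪u, Z j⟫² + |∑_{j≤t} ⟪u, Z j⟫|) - 2k ln (4t)`.
Then for `α ∈ (0,1)` the stopping time `τ = inf {t ≥ 1 : W t ≥ 1/α}` satisfies
`E[τ] ≤ (288k/Δm²) ln (576k/Δm²) + (72/Δm²) ln (72/Δm²) + (72/Δm²) ln (1/α) + π²/6`. -/
theorem mv_ons_expected_stopping_time
    {Ω : Type*} {m : MeasurableSpace Ω} {μ : Measure Ω} [IsProbabilityMeasure μ]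
    {k : ℕ}
    (Z : ℕ → Ω → (Fin k → ℝ)) (W : ℕ → Ω → ℝ) (Δm : ℝ)
    (hZmeas : ∀ t : ℕ, Measurable (Z t))
    (hZbdd : ∀ t : ℕ, 1 ≤ t → ∀ ω, ∀ i, Z t ω i ∈ Set.Icc (-1 : ℝ) 1)
    (hiid : iIndepFun
      (fun t : ℕ => Z (t + 1)) μ)
    (hident : ∀ t : ℕ, 1 ≤ t → IdentDistrib (Z t) (Z 1) μ μ)
    (hΔm : Δm = ⨆ i : Fin k, |∫ ω, Z 1 ω i ∂μ|) (hΔmpos : 0 < Δm)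
    (hWmeas : ∀ t : ℕ, Measurable (W t))
    (hWnonneg : ∀ t : ℕ, 1 ≤ t → ∀ᵐ ω ∂μ, 0 ≤ W t ω)
    (hlogW : ∀ᵐ ω ∂μ, ∀ t : ℕ, 1 ≤ t → ∀ u : Fin k → ℝ, (∑ i, |u i|) = 1 →
      (1 / 4) * ((∑ j ∈ Finset.Icc 1 t, ∑ i, u i * Z j ω i) ^ 2 /
          ((∑ j ∈ Finset.Icc 1 t, (∑ i, u i * Z j ω i) ^ 2) +
            |∑ j ∈ Finset.Icc 1 t, ∑ i, u i * Z j ω i|)) -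
        2 * k * Real.log (4 * t) ≤ Real.log (W t ω))
    {α : ℝ} (hα : α ∈ Set.Ioo (0 : ℝ) 1) :
    expStopTime μ W α ≤
      ENNReal.ofReal ((288 * k / Δm ^ 2) * Real.log (576 * k / Δm ^ 2) +
        (72 / Δm ^ 2) * Real.log (72 / Δm ^ 2) +
        (72 / Δm ^ 2) * Real.log (1 / α) + Real.pi ^ 2 / 6) := by
  classical
  -- k ≥ 1
  have hk : 1 ≤ k := by
    by_contra h
    have hk0 : k = 0 := by omega
    subst hk0
    rw [hΔm] at hΔmpos
    simp [Real.iSup_of_isEmpty] at hΔmpos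
  have hkR : (1:ℝ) ≤ (k:ℝ) := by exact_mod_cast hk
  haveI : Nonempty (Fin k) := ⟨⟨0, by omega⟩⟩
  obtain ⟨i0, hi0⟩ := Finite.exists_max (fun i : Fin k => |∫ ω, Z 1 ω i ∂μ|)
  have hΔeq : Δm = |∫ ω, Z 1 ω i0 ∂μ| := by
    rw [hΔm]
    exact le_antisymm (ciSup_le hi0)
      (le_ciSup (f := fun i : Fin k => |∫ ω, Z 1 ω i ∂μ|) (Set.Finite.bddAbove (Set.finite_range _)) i0)
  have hZc : ∀ t i, Measurable fun ω => Z t ω i :=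
    fun t i => (measurable_pi_apply i).comp (hZmeas t)
  have hZabs : ∀ t, 1 ≤ t → ∀ ω i, |Z t ω i| ≤ 1 := by
    intro t ht ω i
    have h := hZbdd t ht ω i
    exact abs_le.2 ⟨h.1, h.2⟩
  have hZint : ∀ i, Integrable (fun ω => Z 1 ω i) μ :=
    fun i => my_integrable μ 1 (hZc 1 i) (fun ω => hZabs 1 le_rfl ω i)
  have hΔ1 : Δm ≤ 1 := by
    rw [hΔeq]
    calc |∫ ω, Z 1 ω i0 ∂μ| ≤ ∫ ω, |Z 1 ω i0| ∂μ := by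
          simpa [Real.norm_eq_abs] using
            norm_integral_le_integral_norm (μ := μ) (f := fun ω => Z 1 ω i0)
      _ ≤ ∫ _ω, (1:ℝ) ∂μ := by
          apply integral_mono ((hZint i0).abs) (integrable_const 1)
          intro ω; exact hZabs 1 le_rfl ω i0
      _ = 1 := by simp
  -- sign and scalar process
  set σ : ℝ := if 0 ≤ ∫ ω, Z 1 ω i0 ∂μ then 1 else -1 with hσ
  have hσcases : σ = 1 ∨ σ = -1 := by
    by_cases h : 0 ≤ ∫ ω, Z 1 ω i0 ∂μ <;> simp [hσ, h]
  have hσabs : |σ| = 1 := by rcases hσcases with h | h <;> simp [h]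
  set X : ℕ → Ω → ℝ := fun t ω => σ * Z t ω i0 with hXdef
  have hXmeas : ∀ t, Measurable (X t) := fun t => (hZc t i0).const_mul σ
  have hXbdd : ∀ t, 1 ≤ t → ∀ ω, |X t ω| ≤ 1 := by
    intro t ht ω
    rw [hXdef]
    simp only []
    rw [abs_mul, hσabs, one_mul]
    exact hZabs t ht ω i0
  have hXmean : ∫ ω, X 1 ω ∂μ = Δm := by
    rw [hXdef]
    simp only []
    rw [integral_const_mul, hΔeq]
    rcases le_or_gt 0 (∫ ω, Z 1 ω i0 ∂μ) with h | h
    · rw [hσ, if_pos h, one_mul, abs_of_nonneg h]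
    · rw [hσ, if_neg (not_le.2 h), abs_of_neg h]; ring
  set u : Fin k → ℝ := fun i => if i = i0 then σ else 0 with hu
  have hu1 : ∑ i, |u i| = 1 := by
    rw [hu]
    have : ∀ i : Fin k, |if i = i0 then σ else 0| = if i = i0 then (1:ℝ) else 0 := by
      intro i; by_cases h : i = i0 <;> simp [h, hσabs]
    simp only [this]
    simp
  have huZ : ∀ (j : ℕ) (ω : Ω), (∑ i, u i * Z j ω i) = X j ω := by
    intro j ω
    rw [hu, hXdef]
    simp only []
    rw [Finset.sum_eq_single i0]
    · simp
    · intro b _ hb; simp [hb]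
    · intro h; exact absurd (Finset.mem_univ i0) h
  have hXindep : iIndepFun (fun t => X (t + 1)) μ := by
    have h := hiid.comp (fun _ => fun v : Fin k → ℝ => σ * v i0)
      (fun _ => by fun_prop)
    exact h
  have hXident : ∀ t : ℕ, IdentDistrib (X (t + 1)) (X 1) μ μ := by
    intro t
    exact (hident (t + 1) (by omega)).comp ((measurable_pi_apply i0).const_mul σ)
  -- almost sure good set
  have hWnn : ∀ᵐ ω ∂μ, ∀ n : ℕ, 1 ≤ n → 0 ≤ W n ω := by
    rw [MeasureTheory.ae_all_iff]
    intro n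
    by_cases h : 1 ≤ n
    · filter_upwards [hWnonneg n h] with ω h2 _
      exact h2
    · filter_upwards with ω h2
      exact absurd h2 h
  have hG := hlogW.and hWnn
  set P : Ω → Prop := fun ω => (∀ t : ℕ, 1 ≤ t → ∀ v : Fin k → ℝ, (∑ i, |v i|) = 1 →
      (1 / 4) * ((∑ j ∈ Finset.Icc 1 t, ∑ i, v i * Z j ω i) ^ 2 /
          ((∑ j ∈ Finset.Icc 1 t, (∑ i, v i * Z j ω i) ^ 2) +
            |∑ j ∈ Finset.Icc 1 t, ∑ i, v i * Z j ω i|)) -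
        2 * k * Real.log (4 * t) ≤ Real.log (W t ω)) ∧
      (∀ n : ℕ, 1 ≤ n → 0 ≤ W n ω) with hP
  have hGnull : μ {ω | ¬ P ω} = 0 := hG
  -- threshold constant
  set Tr : ℝ := 288 * k / Δm ^ 2 * Real.log (576 * k / Δm ^ 2) +
      72 / Δm ^ 2 * Real.log (72 / Δm ^ 2) + 72 / Δm ^ 2 * Real.log (1 / α) with hTr
  have hL : 0 < Real.log (1 / α) := Real.log_pos (one_lt_one_div hα.1 hα.2)
  have hD0 : (0:ℝ) < Δm ^ 2 := by positivity
  have hTrpos : 0 < Tr := by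
    rw [hTr]
    have hD1' : Δm ^ 2 ≤ 1 := by nlinarith
    have h1 : 0 < Real.log (576 * k / Δm ^ 2) := Real.log_pos (by
      rw [lt_div_iff₀ hD0]; nlinarith)
    have h2 : 0 < Real.log (72 / Δm ^ 2) := Real.log_pos (by
      rw [lt_div_iff₀ hD0]; nlinarith)
    have h3 : (0:ℝ) < 288 * k / Δm ^ 2 := by positivity
    have h4 : (0:ℝ) < 72 / Δm ^ 2 := by positivity
    nlinarith [mul_pos h3 h1, mul_pos h4 h2, mul_pos h4 hL]
  -- per-term bound
  have hterm : ∀ n : ℕ, 1 ≤ n → Tr ≤ (n:ℝ) →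
      μ {ω | ((n:ℕ):ℕ∞) < stopTime W α ω} ≤ ENNReal.ofReal (1 / (n:ℝ) ^ 2) := by
    intro n hn1 hTrn
    obtain ⟨haA, haB⟩ := my_threshold k Δm α hkR hΔmpos hΔ1 hα.1 hα.2 n hn1
      (by rw [← hTr]; exact hTrn)
    have hincl : {ω | ((n:ℕ):ℕ∞) < stopTime W α ω} ⊆
        {ω | ∑ j ∈ Finset.Icc 1 n, X j ω ≤ Δm * n / 2} ∪ {ω | ¬ P ω} := by
      intro ω hω
      by_cases hR : P ω
      · left
        show ∑ j ∈ Finset.Icc 1 n, X j ω ≤ Δm * n / 2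
        by_contra hScon
        push_neg at hScon
        have hlog := hR.1 n hn1 u hu1
        simp only [huZ] at hlog
        set s := ∑ j ∈ Finset.Icc 1 n, X j ω with hs
        set q := ∑ j ∈ Finset.Icc 1 n, (X j ω) ^ 2 with hq
        have hS : Δm * n / 2 < s := hScon
        have hnR : (1:ℝ) ≤ (n:ℝ) := by exact_mod_cast hn1
        have hspos : 0 < s := lt_of_le_of_lt (by positivity : (0:ℝ) ≤ Δm * n / 2) hS
        have hsabs : |s| = s := abs_of_pos hspos
        have hqn : q ≤ (n:ℝ) := by
          rw [hq]
          calc ∑ j ∈ Finset.Icc 1 n, (X j ω) ^ 2 ≤ ∑ _j ∈ Finset.Icc 1 n, (1:ℝ) := by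
                apply Finset.sum_le_sum
                intro j hj
                have hb := hXbdd j (Finset.mem_Icc.1 hj).1 ω
                nlinarith [abs_nonneg (X j ω), sq_abs (X j ω)]
            _ = (n:ℝ) := by simp [Nat.card_Icc]
        have hsn : s ≤ (n:ℝ) := by
          rw [hs]
          calc ∑ j ∈ Finset.Icc 1 n, X j ω ≤ ∑ _j ∈ Finset.Icc 1 n, (1:ℝ) := by
                apply Finset.sum_le_sum
                intro j hj
                exact (abs_le.1 (hXbdd j (Finset.mem_Icc.1 hj).1 ω)).2
            _ = (n:ℝ) := by simp [Nat.card_Icc]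
        have hq0 : 0 ≤ q := Finset.sum_nonneg fun j _ => sq_nonneg _
        have hden : 0 < q + s := by linarith
        have hfrac : Δm ^ 2 * n / 8 ≤ s ^ 2 / (q + s) := by
          have h1 : s ^ 2 / (2 * n) ≤ s ^ 2 / (q + s) :=
            div_le_div_of_nonneg_left (sq_nonneg s) hden (by linarith)
          have h2 : Δm ^ 2 * n / 8 ≤ s ^ 2 / (2 * n) := by
            rw [le_div_iff₀ (by linarith : (0:ℝ) < 2 * n)]
            nlinarith [mul_self_le_mul_self (by positivity : (0:ℝ) ≤ Δm * n / 2) hS.le]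
          linarith
        rw [hsabs] at hlog
        have hWlog : Real.log (1 / α) ≤ Real.log (W n ω) := by linarith
        have hW0 : 0 ≤ W n ω := hR.2 n hn1
        have hWpos : 0 < W n ω := by
          rcases hW0.eq_or_lt with h | h
          · exfalso
            rw [← h, Real.log_zero] at hWlog
            linarith
          · exact h
        have hfin : 1 / α ≤ W n ω :=
          (Real.log_le_log_iff (one_div_pos.2 hα.1) hWpos).1 hWlog
        have hτ : stopTime W α ω ≤ (n : ℕ∞) := sInf_le ⟨n, rfl, hn1, hfin⟩
        exact absurd hω (not_lt.2 hτ)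
      · right
        exact hR
    calc μ {ω | ((n:ℕ):ℕ∞) < stopTime W α ω}
        ≤ μ ({ω | ∑ j ∈ Finset.Icc 1 n, X j ω ≤ Δm * n / 2} ∪ {ω | ¬ P ω}) :=
          measure_mono hincl
      _ ≤ μ {ω | ∑ j ∈ Finset.Icc 1 n, X j ω ≤ Δm * n / 2} + μ {ω | ¬ P ω} :=
          measure_union_le _ _
      _ = μ {ω | ∑ j ∈ Finset.Icc 1 n, X j ω ≤ Δm * n / 2} := by
          rw [hGnull, add_zero]
      _ ≤ ENNReal.ofReal (Real.exp (-(Δm ^ 2) * n / 16)) :=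
          my_chernoff X Δm hΔmpos hΔ1 hXmeas hXbdd hXindep hXident hXmean n
      _ ≤ ENNReal.ofReal (1 / (n:ℝ) ^ 2) := by
          apply ENNReal.ofReal_le_ofReal
          have hnpos : (0:ℝ) < (n:ℝ) := by exact_mod_cast hn1
          have h3 : Real.exp (-(2 * Real.log (n:ℝ))) = 1 / (n:ℝ) ^ 2 := by
            rw [show (2:ℝ) * Real.log (n:ℝ) = Real.log ((n:ℝ) ^ 2) by
              rw [Real.log_pow]; norm_num]
            rw [Real.exp_neg, Real.exp_log (by positivity), one_div]
          rw [← h3]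
          exact Real.exp_le_exp.2 (by linarith)
  -- summation
  set M := ⌈Tr⌉₊ with hM
  have hM1 : 1 ≤ M := Nat.one_le_iff_ne_zero.2 (by
    intro h
    rw [hM, Nat.ceil_eq_zero] at h
    exact absurd h (not_le.2 hTrpos))
  have hπ : (0:ℝ) ≤ Real.pi ^ 2 / 6 := by positivity
  have hsum2 : HasSum (fun t : ℕ => 1 / ((t:ℝ) + 1) ^ 2) (Real.pi ^ 2 / 6) := by
    have h1 := (hasSum_nat_add_iff (f := fun n : ℕ => 1 / (n:ℝ) ^ 2) 1).2
      (by simpa using hasSum_zeta_two)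
    have h2 : (fun n : ℕ => 1 / (((n + 1 : ℕ)):ℝ) ^ 2) = fun t : ℕ => 1 / ((t:ℝ) + 1) ^ 2 := by
      funext t
      push_cast
      ring
    rwa [h2] at h1
  calc expStopTime μ W α
      ≤ ∑' t : ℕ, ((if t + 1 < M then (1:ℝ≥0∞) else 0) +
        ENNReal.ofReal (1 / ((t:ℝ) + 1) ^ 2)) := by
        apply ENNReal.tsum_le_tsum
        intro t
        by_cases h : t + 1 < M
        · rw [if_pos h]
          exact le_add_right ((measure_mono (Set.subset_univ _)).trans measure_univ.le)
        · rw [if_neg h, zero_add]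
          have hMt : M ≤ t + 1 := not_lt.1 h
          have hTn : Tr ≤ ((t + 1 : ℕ):ℝ) := by
            calc Tr ≤ (M:ℝ) := Nat.le_ceil Tr
              _ ≤ ((t + 1 : ℕ):ℝ) := by exact_mod_cast hMt
          have hh := hterm (t + 1) (by omega) hTn
          have he : (1:ℝ) / (((t + 1 : ℕ)):ℝ) ^ 2 = 1 / ((t:ℝ) + 1) ^ 2 := by
            push_cast
            ring
          rw [he] at hh
          exact hh
    _ = (∑' t : ℕ, (if t + 1 < M then (1:ℝ≥0∞) else 0)) +
        ∑' t : ℕ, ENNReal.ofReal (1 / ((t:ℝ) + 1) ^ 2) := ENNReal.tsum_add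
    _ ≤ ENNReal.ofReal Tr + ENNReal.ofReal (Real.pi ^ 2 / 6) := by
        apply add_le_add
        · have h1 : (∑' t : ℕ, (if t + 1 < M then (1:ℝ≥0∞) else 0)) =
              ∑ t ∈ Finset.range (M - 1), (if t + 1 < M then (1:ℝ≥0∞) else 0) := by
            apply tsum_eq_sum
            intro t ht
            rw [if_neg]
            intro hc
            exact ht (Finset.mem_range.2 (by omega))
          rw [h1]
          calc ∑ t ∈ Finset.range (M - 1), (if t + 1 < M then (1:ℝ≥0∞) else 0)
              ≤ ∑ _t ∈ Finset.range (M - 1), (1:ℝ≥0∞) :=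
                Finset.sum_le_sum (fun t _ => by split <;> simp)
            _ = ((M - 1 : ℕ) : ℝ≥0∞) := by simp
            _ ≤ ENNReal.ofReal Tr := by
                rw [← ENNReal.ofReal_natCast]
                apply ENNReal.ofReal_le_ofReal
                have h2 : (M:ℝ) < Tr + 1 := Nat.ceil_lt_add_one hTrpos.le
                have h3 : ((M - 1 : ℕ):ℝ) = (M:ℝ) - 1 := by
                  rw [Nat.cast_sub hM1]
                  norm_num
                rw [h3]
                linarith
        · rw [← ENNReal.ofReal_tsum_of_nonneg (fun t => by positivity) hsum2.summable,
            hsum2.tsum_eq]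
    _ = ENNReal.ofReal (Tr + Real.pi ^ 2 / 6) :=
        (ENNReal.ofReal_add hTrpos.le hπ).symm
end

section
/- Regret of entropic follow-the-regularized-leader over the ℓ¹ ball: Let k ≥ 1 and let (Z⃗_t)_{t≥1} be any sequence of vectors in [−1,1]^k. Define the augmented vectors Z̃_t = (Z⃗_t, −Z⃗_t) ∈ [−1,1]^{2k}, the cumulative sums G_t = Σ_{j=1}^{t−1} Z̃_j ∈ ℝ^{2k} (with G_1 = 0), and for each t ≥ 1 the probability vector v_t ∈ ℝ^{2k} with coordinates v_{t,ℓ} = exp(√(ln(2k)/t)·G_{t,ℓ}) / Σ_{ℓ'=1}^{2k} exp(√(ln(2k)/t)·G_{t,ℓ'}); write v_t = (v_t⁺, v_t⁻) with v_t⁺, v_t⁻ ∈ ℝ^k and set u_t = v_t⁺ − v_t⁻. Then for every t ≥ 1, Σ_{j=1}^t ⟨u_j, Z⃗_j⟩ ≥ max_{u ∈ ℝ^k, ‖u‖₁ ≤ 1} Σ_{j=1}^t ⟨u, Z⃗_j⟩ − 2√(t·ln(2k)). -/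
open Real Finset

lemma hoeffding_scalar {m : ℝ} (hm : |m| ≤ 1) {c : ℝ} (hc : 0 ≤ c) :
    Real.log (Real.cosh c + m * Real.sinh c) ≤ c * m + c ^ 2 / 2 := by
  obtain ⟨hm1, hm2⟩ := abs_le.mp hm
  have hm2' : m ^ 2 ≤ 1 := by nlinarith
  set D : ℝ → ℝ := fun y => Real.cosh y + m * Real.sinh y with hDdef
  set N : ℝ → ℝ := fun y => Real.sinh y + m * Real.cosh y with hNdef
  have hDpos : ∀ x, 0 < D x := by
    intro x
    have hsq := Real.cosh_sq x
    have hcp := Real.cosh_pos x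
    have h1 : m ^ 2 * Real.sinh x ^ 2 ≤ Real.sinh x ^ 2 := by nlinarith [sq_nonneg (Real.sinh x)]
    by_contra h
    push_neg at h
    have h2 : Real.cosh x ≤ -(m * Real.sinh x) := by
      simp only [hDdef] at h; linarith
    nlinarith [sq_nonneg (m * Real.sinh x)]
  have hDderiv : ∀ x, HasDerivAt D (N x) x := fun x =>
    (Real.hasDerivAt_cosh x).add ((Real.hasDerivAt_sinh x).const_mul m)
  have hNderiv : ∀ x, HasDerivAt N (D x) x := fun x =>
    (Real.hasDerivAt_sinh x).add ((Real.hasDerivAt_cosh x).const_mul m)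
  have hDN : ∀ x, D x ^ 2 - N x ^ 2 = 1 - m ^ 2 := by
    intro x
    simp only [hDdef, hNdef]
    nlinarith [Real.cosh_sq x]
  set g : ℝ → ℝ := fun y => m + y - N y / D y with hgdef
  have hgderiv : ∀ x, HasDerivAt g ((N x / D x) ^ 2) x := by
    intro x
    have h1 : HasDerivAt (fun y => m + y) 1 x := (hasDerivAt_id x).const_add m
    have h2 : HasDerivAt (fun y => N y / D y) ((D x * D x - N x * N x) / D x ^ 2) x :=
      (hNderiv x).div (hDderiv x) (hDpos x).ne'
    have h3 := h1.sub h2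
    refine HasDerivAt.congr_deriv h3 ?_
    have hD0 : D x ≠ 0 := (hDpos x).ne'
    field_simp
    nlinarith [hDN x]
  have hgmono : Monotone g :=
    monotone_of_deriv_nonneg (fun x => (hgderiv x).differentiableAt)
      (fun x => by rw [(hgderiv x).deriv]; positivity)
  have hg0 : g 0 = 0 := by simp [hgdef, hNdef, hDdef]
  set f : ℝ → ℝ := fun y => y * m + y ^ 2 / 2 - Real.log (D y) with hfdef
  have hfderiv : ∀ x, HasDerivAt f (g x) x := by
    intro x
    have h1 : HasDerivAt (fun y : ℝ => y * m) m x := by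
      simpa using (hasDerivAt_id x).mul_const m
    have h2 : HasDerivAt (fun y : ℝ => y ^ 2 / 2) x x := by
      have := (hasDerivAt_pow 2 x).div_const 2
      simpa using this
    have h3 : HasDerivAt (fun y => Real.log (D y)) (N x / D x) x :=
      (hDderiv x).log (hDpos x).ne'
    have h4 := (h1.add h2).sub h3
    exact h4
  have hfmono : MonotoneOn f (Set.Ici 0) := by
    apply monotoneOn_of_deriv_nonneg (convex_Ici 0)
    · exact (Differentiable.continuous (fun x => (hfderiv x).differentiableAt)).continuousOn
    · exact fun x _ => ((hfderiv x).differentiableAt).differentiableWithinAt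
    · intro x hx
      rw [interior_Ici] at hx
      rw [(hfderiv x).deriv]
      have := hgmono (le_of_lt hx)
      rw [hg0] at this
      exact this
  have hf0 : f 0 = 0 := by simp [hfdef, hDdef]
  have := hfmono (Set.self_mem_Ici) (Set.mem_Ici.mpr hc) hc
  rw [hf0] at this
  simp only [hfdef] at this
  linarith

lemma hoeffding_discrete {ι : Type*} [Fintype ι] (p z : ι → ℝ) (hp : ∀ ℓ, 0 ≤ p ℓ)
    (hps : ∑ ℓ, p ℓ = 1) (hz : ∀ ℓ, |z ℓ| ≤ 1) {c : ℝ} (hc : 0 ≤ c) :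
    Real.log (∑ ℓ, p ℓ * Real.exp (c * z ℓ)) ≤ c * (∑ ℓ, p ℓ * z ℓ) + c ^ 2 / 2 := by
  set m := ∑ ℓ, p ℓ * z ℓ with hmdef
  have hm : |m| ≤ 1 := by
    calc |m| ≤ ∑ ℓ, |p ℓ * z ℓ| := Finset.abs_sum_le_sum_abs _ _
    _ ≤ ∑ ℓ, p ℓ := by
        apply Finset.sum_le_sum
        intro ℓ _
        rw [abs_mul, abs_of_nonneg (hp ℓ)]
        calc p ℓ * |z ℓ| ≤ p ℓ * 1 := mul_le_mul_of_nonneg_left (hz ℓ) (hp ℓ)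
        _ = p ℓ := mul_one _
    _ = 1 := hps
  have chord : ∀ ℓ, Real.exp (c * z ℓ) ≤ Real.cosh c + z ℓ * Real.sinh c := by
    intro ℓ
    obtain ⟨hz1, hz2⟩ := abs_le.mp (hz ℓ)
    have ha : (0:ℝ) ≤ (1 + z ℓ)/2 := by linarith
    have hb : (0:ℝ) ≤ (1 - z ℓ)/2 := by linarith
    have hab : (1 + z ℓ)/2 + (1 - z ℓ)/2 = 1 := by ring
    have := convexOn_exp.2 (Set.mem_univ c) (Set.mem_univ (-c)) ha hb hab
    simp only [smul_eq_mul] at this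
    have harg : (1 + z ℓ)/2 * c + (1 - z ℓ)/2 * (-c) = c * z ℓ := by ring
    rw [harg] at this
    calc Real.exp (c * z ℓ) ≤ (1 + z ℓ)/2 * Real.exp c + (1 - z ℓ)/2 * Real.exp (-c) := this
    _ = Real.cosh c + z ℓ * Real.sinh c := by rw [Real.cosh_eq, Real.sinh_eq]; ring
  have hsum : ∑ ℓ, p ℓ * Real.exp (c * z ℓ) ≤ Real.cosh c + m * Real.sinh c := by
    calc ∑ ℓ, p ℓ * Real.exp (c * z ℓ)
        ≤ ∑ ℓ, p ℓ * (Real.cosh c + z ℓ * Real.sinh c) :=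
          Finset.sum_le_sum fun ℓ _ => mul_le_mul_of_nonneg_left (chord ℓ) (hp ℓ)
      _ = (∑ ℓ, p ℓ) * Real.cosh c + (∑ ℓ, p ℓ * z ℓ) * Real.sinh c := by
          rw [Finset.sum_mul, Finset.sum_mul]
          rw [← Finset.sum_add_distrib]
          apply Finset.sum_congr rfl
          intro ℓ _; ring
      _ = Real.cosh c + m * Real.sinh c := by rw [hps, hmdef]; ring
  have hpos : 0 < ∑ ℓ, p ℓ * Real.exp (c * z ℓ) := by
    have hex : ∃ ℓ, 0 < p ℓ := by
      by_contra h
      push_neg at h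
      have : ∑ ℓ, p ℓ ≤ 0 := Finset.sum_nonpos (fun ℓ _ => h ℓ)
      linarith [hps]
    obtain ⟨ℓ₀, h0⟩ := hex
    exact Finset.sum_pos' (fun ℓ _ => mul_nonneg (hp ℓ) (Real.exp_pos _).le)
      ⟨ℓ₀, Finset.mem_univ _, mul_pos h0 (Real.exp_pos _)⟩
  calc Real.log (∑ ℓ, p ℓ * Real.exp (c * z ℓ))
      ≤ Real.log (Real.cosh c + m * Real.sinh c) := Real.log_le_log hpos hsum
    _ ≤ c * m + c ^ 2 / 2 := hoeffding_scalar hm hc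

lemma sum_inv_sqrt_le (t : ℕ) : ∑ j ∈ Finset.Icc 1 t, 1 / (2 * Real.sqrt j) ≤ Real.sqrt t := by
  induction t with
  | zero => simp
  | succ t ih =>
    rw [← Finset.insert_Icc_right_eq_Icc_add_one (by omega : 1 ≤ t + 1),
      Finset.sum_insert (by simp)]
    have ha : Real.sqrt t ^ 2 = t := Real.sq_sqrt (Nat.cast_nonneg t)
    have hb : Real.sqrt ((t:ℝ)+1) ^ 2 = (t:ℝ)+1 := Real.sq_sqrt (by positivity)
    have ha0 : 0 ≤ Real.sqrt t := Real.sqrt_nonneg _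
    have hb0 : 0 < Real.sqrt ((t:ℝ)+1) := Real.sqrt_pos.mpr (by positivity)
    have hab : Real.sqrt t ≤ Real.sqrt ((t:ℝ)+1) := Real.sqrt_le_sqrt (by linarith)
    have key : 1 / (2 * Real.sqrt ((t:ℝ)+1)) ≤ Real.sqrt ((t:ℝ)+1) - Real.sqrt t := by
      rw [div_le_iff₀ (by positivity)]
      nlinarith [sq_nonneg (Real.sqrt ((t:ℝ)+1) - Real.sqrt t)]
    push_cast
    push_cast at ih
    linarith

/-- **Regret of entropic follow-the-regularized-leader over the ℓ¹ ball.**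
Let `k ≥ 1` and let `(Z t)_{t ≥ 1}` be vectors in `[-1,1]^k`.  Form the augmented vectors
`Z̃ t = (Z t, -Z t) ∈ [-1,1]^{2k}`, the cumulative sums `G t = ∑_{j=1}^{t-1} Z̃ j`
(so `G 1 = 0`), the softmax (FTRL) iterates
`v t ℓ = exp(√(ln(2k)/t) · G t ℓ) / ∑_{ℓ'} exp(√(ln(2k)/t) · G t ℓ')` on the simplex of
`ℝ^{2k}`, and `u t = v t⁺ - v t⁻`.  Then for every `t ≥ 1`,
`∑_{j=1}^t ⟪u j, Z j⟫ ≥ max_{‖u‖₁ ≤ 1} ∑_{j=1}^t ⟪u, Z j⟫ - 2 √(t ln (2k))`. -/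
theorem ftrl_l1_ball_regret {k : ℕ} (hk : 1 ≤ k)
    (Z : ℕ → Fin k → ℝ)
    (hZbdd : ∀ t : ℕ, 1 ≤ t → ∀ i, Z t i ∈ Set.Icc (-1 : ℝ) 1)
    (Ztilde : ℕ → (Fin k ⊕ Fin k) → ℝ)
    (hZtilde : ∀ t : ℕ, Ztilde t = Sum.elim (Z t) (fun i => -(Z t i)))
    (G : ℕ → (Fin k ⊕ Fin k) → ℝ)
    (hG : ∀ t : ℕ, ∀ ℓ, G t ℓ = ∑ j ∈ Finset.Icc 1 (t - 1), Ztilde j ℓ)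
    (v : ℕ → (Fin k ⊕ Fin k) → ℝ)
    (hv : ∀ t : ℕ, 1 ≤ t → ∀ ℓ,
      v t ℓ = Real.exp (Real.sqrt (Real.log (2 * k) / t) * G t ℓ) /
        ∑ ℓ' : Fin k ⊕ Fin k, Real.exp (Real.sqrt (Real.log (2 * k) / t) * G t ℓ'))
    (u : ℕ → Fin k → ℝ)
    (hu : ∀ t : ℕ, ∀ i, u t i = v t (Sum.inl i) - v t (Sum.inr i)) :
    ∀ t : ℕ, 1 ≤ t → ∀ w : Fin k → ℝ, (∑ i, |w i|) ≤ 1 →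
      (∑ j ∈ Finset.Icc 1 t, ∑ i, w i * Z j i) - 2 * Real.sqrt (t * Real.log (2 * k)) ≤
        ∑ j ∈ Finset.Icc 1 t, ∑ i, u j i * Z j i := by
  haveI : Nonempty (Fin k) := ⟨⟨0, hk⟩⟩
  set L : ℝ := Real.log (2 * k) with hLdef
  have hk1 : (1:ℝ) ≤ (k:ℝ) := by exact_mod_cast hk
  have hL : 0 < L := Real.log_pos (by linarith)
  set η : ℕ → ℝ := fun s => Real.sqrt (L / s) with hηdef
  have hηnn : ∀ s, 0 ≤ η s := fun s => Real.sqrt_nonneg _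
  have hηpos : ∀ s : ℕ, 1 ≤ s → 0 < η s := by
    intro s hs
    apply Real.sqrt_pos.mpr
    have : (0:ℝ) < s := by exact_mod_cast hs
    positivity
  have hηmono : ∀ s : ℕ, 1 ≤ s → η (s+1) ≤ η s := by
    intro s hs
    apply Real.sqrt_le_sqrt
    have h0 : (0:ℝ) < s := by exact_mod_cast hs
    apply div_le_div_of_nonneg_left hL.le h0
    push_cast; linarith
  set W : ℕ → ℝ → ℝ := fun s c => ∑ ℓ : Fin k ⊕ Fin k, Real.exp (c * G s ℓ) with hWdef
  have hWpos : ∀ s c, 0 < W s c :=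
    fun s c => Finset.sum_pos (fun ℓ _ => Real.exp_pos _) Finset.univ_nonempty
  have hcard : (Finset.univ : Finset (Fin k ⊕ Fin k)).card = 2 * k := by
    simp [Fintype.card_sum]; ring
  have hG1 : ∀ ℓ, G 1 ℓ = 0 := by
    intro ℓ; rw [hG]; simp
  have hW1 : ∀ c, W 1 c = 2 * k := by
    intro c
    simp only [hWdef]
    rw [Finset.sum_congr rfl (fun ℓ _ => by rw [hG1 ℓ, mul_zero, Real.exp_zero])]
    rw [Finset.sum_const, hcard]
    push_cast; ring
  -- v in terms of W
  have hvW : ∀ s : ℕ, 1 ≤ s → ∀ ℓ, v s ℓ = Real.exp (η s * G s ℓ) / W s (η s) := by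
    intro s hs ℓ
    rw [hv s hs ℓ]
  have hvpos : ∀ s : ℕ, 1 ≤ s → ∀ ℓ, 0 < v s ℓ := by
    intro s hs ℓ
    rw [hvW s hs ℓ]
    exact div_pos (Real.exp_pos _) (hWpos s (η s))
  have hvsum : ∀ s : ℕ, 1 ≤ s → ∑ ℓ, v s ℓ = 1 := by
    intro s hs
    rw [Finset.sum_congr rfl (fun ℓ _ => hvW s hs ℓ), ← Finset.sum_div]
    exact div_self (hWpos s (η s)).ne'
  -- recursion for G
  have hGrec : ∀ s : ℕ, 1 ≤ s → ∀ ℓ, G (s+1) ℓ = G s ℓ + Ztilde s ℓ := by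
    intro s hs ℓ
    obtain ⟨r, rfl⟩ : ∃ r, s = r + 1 := ⟨s - 1, by omega⟩
    rw [hG, hG]
    simp only [Nat.add_sub_cancel]
    rw [← Finset.insert_Icc_right_eq_Icc_add_one (by omega : 1 ≤ r + 1), Finset.sum_insert (by simp)]
    ring
  have hZabs : ∀ s : ℕ, 1 ≤ s → ∀ ℓ, |Ztilde s ℓ| ≤ 1 := by
    intro s hs ℓ
    rw [hZtilde]
    rcases ℓ with i | i
    · obtain ⟨h1, h2⟩ := hZbdd s hs i
      simpa using abs_le.mpr ⟨h1, h2⟩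
    · obtain ⟨h1, h2⟩ := hZbdd s hs i
      simp only [Sum.elim_inr, abs_neg]
      exact abs_le.mpr ⟨h1, h2⟩
  -- Step inequality (Hoeffding)
  have step : ∀ s : ℕ, 1 ≤ s →
      Real.log (W (s+1) (η s)) ≤
        Real.log (W s (η s)) + η s * (∑ ℓ, v s ℓ * Ztilde s ℓ) + (η s) ^ 2 / 2 := by
    intro s hs
    have hWne : W s (η s) ≠ 0 := (hWpos s (η s)).ne'
    have key : W (s+1) (η s) = W s (η s) * ∑ ℓ, v s ℓ * Real.exp (η s * Ztilde s ℓ) := by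
      calc W (s+1) (η s) = ∑ ℓ, Real.exp (η s * G s ℓ) * Real.exp (η s * Ztilde s ℓ) := by
            simp only [hWdef]
            exact Finset.sum_congr rfl fun ℓ _ => by rw [hGrec s hs ℓ, mul_add, Real.exp_add]
        _ = W s (η s) * ∑ ℓ, v s ℓ * Real.exp (η s * Ztilde s ℓ) := by
            rw [Finset.mul_sum]
            apply Finset.sum_congr rfl
            intro ℓ _
            rw [hvW s hs ℓ]
            field_simp
    have hspos : 0 < ∑ ℓ, v s ℓ * Real.exp (η s * Ztilde s ℓ) :=
      Finset.sum_pos (fun ℓ _ => mul_pos (hvpos s hs ℓ) (Real.exp_pos _)) Finset.univ_nonempty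
    rw [key, Real.log_mul (hWpos s (η s)).ne' hspos.ne']
    have := hoeffding_discrete (v s) (Ztilde s) (fun ℓ => (hvpos s hs ℓ).le) (hvsum s hs)
      (hZabs s hs) (hηnn s)
    linarith
  -- Monotonicity in the learning rate
  have mono : ∀ (s : ℕ) (a b : ℝ), 0 < a → a ≤ b →
      (Real.log (W s a) - L) / a ≤ (Real.log (W s b) - L) / b := by
    intro s a b ha hab
    have hb : 0 < b := lt_of_lt_of_le ha hab
    have h2k : (0:ℝ) < 2 * k := by linarith
    have hmean := Real.arith_mean_le_rpow_mean Finset.univ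
      (fun _ : Fin k ⊕ Fin k => 1 / (2 * (k:ℝ))) (fun ℓ => Real.exp (a * G s ℓ))
      (fun ℓ _ => by positivity)
      (by rw [Finset.sum_const, hcard, nsmul_eq_mul]; push_cast; field_simp)
      (fun ℓ _ => (Real.exp_pos _).le)
      ((one_le_div ha).mpr hab)
    have hzp : ∀ ℓ : Fin k ⊕ Fin k,
        Real.exp (a * G s ℓ) ^ (b / a) = Real.exp (b * G s ℓ) := by
      intro ℓ
      rw [← Real.exp_log (Real.rpow_pos_of_pos (Real.exp_pos _) _),
        Real.log_rpow (Real.exp_pos _), Real.log_exp]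
      congr 1
      field_simp
    beta_reduce at hmean
    have e1 : ∑ ℓ : Fin k ⊕ Fin k, 1 / (2 * (k:ℝ)) * Real.exp (a * G s ℓ)
        = W s a / (2 * k) := by
      rw [hWdef, Finset.sum_div]
      exact Finset.sum_congr rfl (fun ℓ _ => by ring)
    have e2 : ∑ ℓ : Fin k ⊕ Fin k, 1 / (2 * (k:ℝ)) * Real.exp (a * G s ℓ) ^ (b / a)
        = W s b / (2 * k) := by
      rw [Finset.sum_congr rfl (fun ℓ (_ : ℓ ∈ Finset.univ) => by rw [hzp ℓ]), hWdef,
        Finset.sum_div]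
      exact Finset.sum_congr rfl (fun ℓ _ => by ring)
    rw [e1, e2] at hmean
    have hba : 1 / (b / a) = a / b := by field_simp
    rw [hba] at hmean
    have hWa : 0 < W s a / (2 * k) := div_pos (hWpos s a) h2k
    have hWb : 0 < W s b / (2 * k) := div_pos (hWpos s b) h2k
    have hlog := Real.log_le_log hWa hmean
    rw [Real.log_rpow hWb] at hlog
    rw [Real.log_div (hWpos s a).ne' h2k.ne', Real.log_div (hWpos s b).ne' h2k.ne'] at hlog
    rw [div_le_div_iff₀ ha hb]
    have := mul_le_mul_of_nonneg_right hlog hb.le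
    calc (Real.log (W s a) - L) * b = (Real.log (W s a) - Real.log (2 * (k:ℝ))) * b := by
          rw [hLdef]
      _ ≤ (a / b * (Real.log (W s b) - Real.log (2 * (k:ℝ)))) * b := this
      _ = (Real.log (W s b) - L) * a := by rw [hLdef]; field_simp
  -- Telescoping
  have telescope : ∀ s : ℕ, 1 ≤ s →
      (Real.log (W (s+1) (η s)) - L) / η s ≤
        ∑ j ∈ Finset.Icc 1 s, ((∑ ℓ, v j ℓ * Ztilde j ℓ) + η j / 2) := by
    intro s hs
    induction s, hs using Nat.le_induction with
    | base =>
      have h1 := step 1 le_rfl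
      rw [hW1 (η 1)] at h1
      have hη1 := hηpos 1 le_rfl
      rw [div_le_iff₀ hη1]
      rw [Finset.Icc_self, Finset.sum_singleton]
      rw [← hLdef] at h1
      nlinarith [h1]
    | succ s hs ih =>
      have h1 := step (s+1) (by omega)
      have hη := hηpos (s+1) (by omega)
      have h2 : (Real.log (W (s+2) (η (s+1))) - L) / η (s+1) ≤
          (Real.log (W (s+1) (η (s+1))) - L) / η (s+1)
            + ((∑ ℓ, v (s+1) ℓ * Ztilde (s+1) ℓ) + η (s+1) / 2) := by
        have e : (Real.log (W (s+1) (η (s+1))) - L) / η (s+1)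
              + ((∑ ℓ, v (s+1) ℓ * Ztilde (s+1) ℓ) + η (s+1) / 2)
            = (Real.log (W (s+1) (η (s+1))) + η (s+1) * (∑ ℓ, v (s+1) ℓ * Ztilde (s+1) ℓ)
                + (η (s+1))^2/2 - L) / η (s+1) := by
          field_simp
          ring
        rw [e]
        gcongr
      have h3 := mono (s+1) (η (s+1)) (η s) hη (hηmono s hs)
      rw [← Finset.insert_Icc_right_eq_Icc_add_one (by omega : 1 ≤ s + 1), Finset.sum_insert (by simp)]
      have := ih
      linarith
  -- Final assembly
  intro t ht w hw
  have hηt := hηpos t ht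
  -- bound on each coordinate of G (t+1)
  have hGle : ∀ ℓ, G (t+1) ℓ ≤ Real.log (W (t+1) (η t)) / η t := by
    intro ℓ
    rw [le_div_iff₀ hηt]
    have h1 : Real.exp (η t * G (t+1) ℓ) ≤ W (t+1) (η t) :=
      Finset.single_le_sum (f := fun ℓ => Real.exp (η t * G (t+1) ℓ))
        (fun ℓ _ => (Real.exp_pos _).le) (Finset.mem_univ ℓ)
    have := Real.log_le_log (Real.exp_pos _) h1
    rw [Real.log_exp] at this
    linarith
  set B : ℝ := Real.log (W (t+1) (η t)) / η t with hBdef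
  -- G(t+1)(inl i) is the cumulative sum S i; inr gives -S i
  have hGlr : ∀ i, G (t+1) (Sum.inr i) = - G (t+1) (Sum.inl i) := by
    intro i
    rw [hG, hG, ← Finset.sum_neg_distrib]
    apply Finset.sum_congr rfl
    intro j _
    rw [hZtilde]
    simp
  have hB0 : 0 ≤ B := by
    have i0 : Fin k := ⟨0, hk⟩
    have h1 := hGle (Sum.inl i0)
    have h2 := hGle (Sum.inr i0)
    rw [hGlr i0] at h2
    linarith
  have habs : ∀ i, |G (t+1) (Sum.inl i)| ≤ B := by
    intro i
    rw [abs_le]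
    constructor
    · have := hGle (Sum.inr i); rw [hGlr i] at this; linarith
    · exact hGle (Sum.inl i)
  -- LHS of goal in terms of G(t+1)
  have hLHS : ∑ j ∈ Finset.Icc 1 t, ∑ i, w i * Z j i ≤ B := by
    rw [Finset.sum_comm]
    have e : ∀ i, ∑ j ∈ Finset.Icc 1 t, w i * Z j i = w i * G (t+1) (Sum.inl i) := by
      intro i
      rw [hG]
      simp only [Nat.add_sub_cancel]
      rw [Finset.mul_sum]
      apply Finset.sum_congr rfl
      intro j _
      rw [hZtilde]
      simp
    rw [Finset.sum_congr rfl (fun i _ => e i)]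
    calc ∑ i, w i * G (t+1) (Sum.inl i) ≤ ∑ i, |w i| * B := by
          apply Finset.sum_le_sum
          intro i _
          calc w i * G (t+1) (Sum.inl i) ≤ |w i * G (t+1) (Sum.inl i)| := le_abs_self _
            _ = |w i| * |G (t+1) (Sum.inl i)| := abs_mul _ _
            _ ≤ |w i| * B := mul_le_mul_of_nonneg_left (habs i) (abs_nonneg _)
      _ = (∑ i, |w i|) * B := (Finset.sum_mul _ _ _).symm
      _ ≤ 1 * B := mul_le_mul_of_nonneg_right hw hB0
      _ = B := one_mul _
  -- inner product identity
  have hinner : ∀ j, (∑ ℓ, v j ℓ * Ztilde j ℓ) = ∑ i, u j i * Z j i := by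
    intro j
    rw [show (∑ i, u j i * Z j i)
        = ∑ i, (v j (Sum.inl i) * Z j i - v j (Sum.inr i) * Z j i) from
      Finset.sum_congr rfl fun i _ => by rw [hu j i]; ring]
    rw [Fintype.sum_sum_type, Finset.sum_sub_distrib]
    simp only [hZtilde, Sum.elim_inl, Sum.elim_inr, mul_neg]
    rw [Finset.sum_neg_distrib]
    ring
  -- the learning-rate identities
  have hLη : L / η t = Real.sqrt (t * L) := by
    have ht0 : (0:ℝ) < t := by exact_mod_cast ht
    have h1 : Real.sqrt (↑t * L) * η t = L := by
      simp only [hηdef]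
      rw [← Real.sqrt_mul (by positivity)]
      rw [show (↑t * L * (L / ↑t)) = L ^ 2 by field_simp]
      exact Real.sqrt_sq hL.le
    exact (div_eq_iff (hηpos t ht).ne').mpr h1.symm
  have hηsum : ∑ j ∈ Finset.Icc 1 t, η j / 2 ≤ Real.sqrt (t * L) := by
    have e : ∀ j ∈ Finset.Icc 1 t, η j / 2 = Real.sqrt L * (1 / (2 * Real.sqrt j)) := by
      intro j hj
      simp only [hηdef]
      rw [Real.sqrt_div hL.le]
      field_simp
    rw [Finset.sum_congr rfl e, ← Finset.mul_sum]
    calc Real.sqrt L * ∑ j ∈ Finset.Icc 1 t, 1 / (2 * Real.sqrt j)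
        ≤ Real.sqrt L * Real.sqrt t :=
          mul_le_mul_of_nonneg_left (sum_inv_sqrt_le t) (Real.sqrt_nonneg _)
      _ = Real.sqrt (t * L) := by rw [← Real.sqrt_mul hL.le, mul_comm]
  have htel := telescope t ht
  have hBsplit : B = (Real.log (W (t+1) (η t)) - L) / η t + L / η t := by
    rw [hBdef, ← add_div, sub_add_cancel]
  have hsplit : ∑ j ∈ Finset.Icc 1 t, ((∑ ℓ, v j ℓ * Ztilde j ℓ) + η j / 2)
      = (∑ j ∈ Finset.Icc 1 t, ∑ ℓ, v j ℓ * Ztilde j ℓ)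
        + ∑ j ∈ Finset.Icc 1 t, η j / 2 := Finset.sum_add_distrib
  have hvu : (∑ j ∈ Finset.Icc 1 t, ∑ ℓ, v j ℓ * Ztilde j ℓ)
      = ∑ j ∈ Finset.Icc 1 t, ∑ i, u j i * Z j i :=
    Finset.sum_congr rfl fun j _ => hinner j
  linarith [hLHS, htel, hBsplit, hsplit, hvu, hηsum, hLη]
end
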